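/- arXiv:2401.17119 — 3 statements merged into one kernel-verified Lean document; each statement's English description precedes it below -/
import Mathlib

section
/- A d-dimensional shift X is an isolated point of the space S^d (with the Hausdorff metric δ_H) if and only if X is of finite type, X has only finitely many maximal subsystems, and X has no outcast (i.e. every proper subsystem of X is contained in a maximal subsystem of X). -/
/-- The group `ℤ^d`. -/
abbrev ZD (d : ℕ) := Fin d → ℤ

/-- A configuration is a map `ℤ^d → ℤ`. -/
abbrev Config (d : ℕ) := ZD d → ℤ

/-- The shift map `σ^u`, defined by `σ^u(x)_v = x_{u+v}`. -/
def shiftMap {d : ℕ} (u : ZD d) (x : Config d) : Config d := fun v => x (u + v)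

/-- The sup norm `‖·‖_∞` on `ℤ^d`, valued in `ℕ`. -/
def normInf {d : ℕ} (n : ZD d) : ℕ := Finset.univ.sup fun i => (n i).natAbs

open Classical in
/-- The metric `δ` on configurations: `δ(x,y) = 2^{-min{‖n‖_∞ : x_n ≠ y_n}}`, `δ(x,x) = 0`. -/
noncomputable def deltaDist {d : ℕ} (x y : Config d) : ℝ :=
  if x = y then 0
  else (2 : ℝ) ^ (-((sInf {m : ℕ | ∃ n : ZD d, normInf n = m ∧ x n ≠ y n} : ℕ) : ℤ))

/-- The closure of a set of configurations with respect to the metric `δ`. -/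
def deltaClosure {d : ℕ} (A : Set (Config d)) : Set (Config d) :=
  {x | ∀ ε : ℝ, 0 < ε → ∃ a ∈ A, deltaDist x a < ε}

/-- A set of configurations is closed for `δ` when it contains all its limit points. -/
def IsDeltaClosed {d : ℕ} (A : Set (Config d)) : Prop := deltaClosure A ⊆ A

/-- A `d`-dimensional shift: a nonempty set of configurations over a common finite
alphabet, closed for `δ` and invariant under every shift map. -/
def IsShift {d : ℕ} (X : Set (Config d)) : Prop :=
  X.Nonempty ∧ (∃ A : Finset ℤ, ∀ x ∈ X, ∀ v : ZD d, x v ∈ A) ∧ IsDeltaClosed X ∧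
    ∀ u : ZD d, ∀ x ∈ X, shiftMap u x ∈ X

/-- The Hausdorff metric `δ_H` on the space of shifts. -/
noncomputable def deltaH {d : ℕ} (X Z : Set (Config d)) : ℝ :=
  max (⨆ x : X, ⨅ z : Z, deltaDist (x : Config d) (z : Config d))
      (⨆ z : Z, ⨅ x : X, deltaDist (x : Config d) (z : Config d))

/-- A subsystem of a shift `X`: a nonempty closed shift-invariant subset of `X`. -/
def IsSubsystem {d : ℕ} (Z X : Set (Config d)) : Prop :=
  Z.Nonempty ∧ Z ⊆ X ∧ IsDeltaClosed Z ∧ ∀ u : ZD d, ∀ z ∈ Z, shiftMap u z ∈ Z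

/-- A maximal subsystem of `X`: a proper subsystem such that any subsystem strictly
between it and `X` equals `X`. -/
def IsMaximalSubsystem {d : ℕ} (Z X : Set (Config d)) : Prop :=
  IsSubsystem Z X ∧ Z ≠ X ∧ ∀ Z', IsSubsystem Z' X → Z ⊂ Z' → Z' = X

/-- An outcast of `X`: a proper subsystem contained in no maximal subsystem of `X`. -/
def IsOutcast {d : ℕ} (Z X : Set (Config d)) : Prop :=
  IsSubsystem Z X ∧ Z ≠ X ∧ ∀ M, IsMaximalSubsystem M X → ¬ Z ⊆ M

/-- A pattern with finite support `U` (given by the values of `p` on `U`) appears in the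
configuration `x`. -/
def PatternAppears {d : ℕ} (U : Finset (ZD d)) (p : ZD d → ℤ) (x : Config d) : Prop :=
  ∃ u : ZD d, ∀ v ∈ U, x (u + v) = p v

/-- The set of configurations over the alphabet `A` avoiding every pattern in `F`. -/
def XofF {d : ℕ} (A : Finset ℤ) (F : Set (Finset (ZD d) × (ZD d → ℤ))) : Set (Config d) :=
  {x | (∀ v : ZD d, x v ∈ A) ∧ ∀ q ∈ F, ¬ PatternAppears q.1 q.2 x}

/-- A shift of finite type: defined by a finite alphabet and a finite set of forbidden
patterns. -/
def IsSFT {d : ℕ} (X : Set (Config d)) : Prop :=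
  ∃ (A : Finset ℤ) (F : Finset (Finset (ZD d) × (ZD d → ℤ))), X = XofF A (F : Set _)

/-- `X` is an isolated point of the subspace `S` (with the Hausdorff metric `δ_H`). -/
def IsolatedIn {d : ℕ} (S : Set (Set (Config d))) (X : Set (Config d)) : Prop :=
  X ∈ S ∧ ∃ ε : ℝ, 0 < ε ∧ ∀ Z ∈ S, deltaH X Z < ε → Z = X

/-- The orbit of a configuration under the shift action. -/
def orbit {d : ℕ} (x : Config d) : Set (Config d) := {y | ∃ u : ZD d, y = shiftMap u x}

/-- A shift is transitive when some point has dense orbit. -/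
def IsTransitive {d : ℕ} (X : Set (Config d)) : Prop :=
  IsShift X ∧ ∃ x ∈ X, X ⊆ deltaClosure (orbit x)

/-- A shift is minimal when its only subsystem is itself. -/
def IsMinimalShift {d : ℕ} (X : Set (Config d)) : Prop :=
  IsShift X ∧ ∀ Z, IsSubsystem Z X → Z = X

section Lemmas
variable {d : ℕ}

lemma two_zpow_pos (m : ℤ) : (0:ℝ) < 2 ^ m := by positivity

lemma two_zpow_mono {m k : ℤ} (h : m ≤ k) : (2:ℝ) ^ (-k) ≤ 2 ^ (-m) :=
  zpow_le_zpow_right₀ (by norm_num) (by omega)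

lemma lt_of_two_zpow_lt {m k : ℤ} (h : (2:ℝ)^(-m) < 2^(-k)) : k < m := by
  by_contra hc
  exact absurd h (not_lt.2 (zpow_le_zpow_right₀ (by norm_num : (1:ℝ) ≤ 2) (by omega : -k ≤ -m)))

lemma deltaDist_self (x : Config d) : deltaDist x x = 0 := if_pos rfl

lemma deltaDist_nonneg (x y : Config d) : 0 ≤ deltaDist x y := by
  unfold deltaDist; split
  · exact le_refl 0
  · positivity

lemma deltaDist_le_one (x y : Config d) : deltaDist x y ≤ 1 := by
  unfold deltaDist; split
  · norm_num
  · calc (2:ℝ) ^ (-((sInf _ : ℕ) : ℤ)) ≤ 2 ^ (-(0:ℤ)) := two_zpow_mono (by omega)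
    _ = 1 := by norm_num

lemma deltaDist_comm (x y : Config d) : deltaDist x y = deltaDist y x := by
  unfold deltaDist
  have hs : {m : ℕ | ∃ n : ZD d, normInf n = m ∧ x n ≠ y n}
      = {m : ℕ | ∃ n : ZD d, normInf n = m ∧ y n ≠ x n} := by
    ext m; constructor <;> rintro ⟨n, h1, h2⟩ <;> exact ⟨n, h1, h2.symm⟩
  rw [hs]
  by_cases h : x = y
  · rw [if_pos h, if_pos h.symm]
  · rw [if_neg h, if_neg (fun hyx => h hyx.symm)]

lemma le_deltaDist_of_ne {x y : Config d} {n : ZD d} (hne : x n ≠ y n) :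
    (2:ℝ) ^ (-(normInf n : ℤ)) ≤ deltaDist x y := by
  have hxy : x ≠ y := fun he => hne (congrFun he n)
  rw [deltaDist, if_neg hxy]
  have hmem : normInf n ∈ {m : ℕ | ∃ n : ZD d, normInf n = m ∧ x n ≠ y n} := ⟨n, rfl, hne⟩
  have := Nat.sInf_le hmem
  exact two_zpow_mono (by omega)

lemma eq_on_box_of_deltaDist_lt {x y : Config d} {k : ℕ}
    (h : deltaDist x y < (2:ℝ) ^ (-(k:ℤ))) : ∀ n : ZD d, normInf n ≤ k → x n = y n := by
  intro n hn
  by_contra hne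
  have h2 : (2:ℝ) ^ (-(k:ℤ)) ≤ 2 ^ (-(normInf n : ℤ)) := two_zpow_mono (by omega)
  exact absurd h (not_lt.2 (le_trans h2 (le_deltaDist_of_ne hne)))

lemma deltaDist_le_of_eq_on_box {x y : Config d} {k : ℕ}
    (h : ∀ n : ZD d, normInf n ≤ k → x n = y n) :
    deltaDist x y ≤ (2:ℝ) ^ (-((k:ℤ)+1)) := by
  rw [deltaDist]; split
  · positivity
  · next hxy =>
    set S := {m : ℕ | ∃ n : ZD d, normInf n = m ∧ x n ≠ y n} with hS
    have hSne : S.Nonempty := by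
      have : ∃ n, x n ≠ y n := Function.ne_iff.1 hxy
      obtain ⟨n, hn⟩ := this
      exact ⟨normInf n, n, rfl, hn⟩
    obtain ⟨n, hn, hne⟩ := Nat.sInf_mem hSne
    have hk : k < sInf S := by
      by_contra hc
      push_neg at hc
      exact hne (h n (by omega))
    exact two_zpow_mono (by omega)

lemma deltaDist_triangle (x y z : Config d) :
    deltaDist x z ≤ max (deltaDist x y) (deltaDist y z) := by
  by_cases hxz : x = z
  · rw [deltaDist, if_pos hxz]
    exact le_max_of_le_left (deltaDist_nonneg x y)
  · rw [deltaDist, if_neg hxz]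
    set S := {m : ℕ | ∃ n : ZD d, normInf n = m ∧ x n ≠ z n} with hS
    have hSne : S.Nonempty := by
      obtain ⟨n, hn⟩ := Function.ne_iff.1 hxz
      exact ⟨normInf n, n, rfl, hn⟩
    obtain ⟨n, hn, hne⟩ := Nat.sInf_mem hSne
    by_cases h1 : x n = y n
    · have h2 : y n ≠ z n := fun h => hne (h1.trans h)
      refine le_max_of_le_right (le_trans (two_zpow_mono (by omega)) (le_deltaDist_of_ne h2))
    · refine le_max_of_le_left (le_trans (two_zpow_mono (by omega)) (le_deltaDist_of_ne h1))

lemma exists_two_zpow_lt {ε : ℝ} (hε : 0 < ε) : ∃ k : ℕ, (2:ℝ) ^ (-(k:ℤ)) < ε := by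
  obtain ⟨n, hn⟩ := exists_pow_lt_of_lt_one hε (by norm_num : (1/2:ℝ) < 1)
  refine ⟨n, ?_⟩
  have : (2:ℝ) ^ (-(n:ℤ)) = (1/2) ^ n := by
    rw [zpow_neg, zpow_natCast, one_div, inv_pow]
  rw [this]; exact hn

lemma normInf_add_le (u v : ZD d) : normInf (u + v) ≤ normInf u + normInf v := by
  unfold normInf
  apply Finset.sup_le
  intro i _
  calc ((u + v) i).natAbs = (u i + v i).natAbs := rfl
  _ ≤ (u i).natAbs + (v i).natAbs := Int.natAbs_add_le _ _
  _ ≤ _ := add_le_add (Finset.le_sup (f := fun i => (u i).natAbs) (Finset.mem_univ i))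
      (Finset.le_sup (f := fun i => (v i).natAbs) (Finset.mem_univ i))

lemma normInf_zero : normInf (0 : ZD d) = 0 := by
  unfold normInf
  simp

-- closure lemmas
lemma subset_deltaClosure (A : Set (Config d)) : A ⊆ deltaClosure A :=
  fun x hx ε hε => ⟨x, hx, by rw [deltaDist_self]; exact hε⟩

lemma deltaClosure_mono {A B : Set (Config d)} (h : A ⊆ B) : deltaClosure A ⊆ deltaClosure B := by
  intro x hx ε hε
  obtain ⟨a, ha, hd⟩ := hx ε hε
  exact ⟨a, h ha, hd⟩

lemma isDeltaClosed_deltaClosure (A : Set (Config d)) : IsDeltaClosed (deltaClosure A) := by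
  intro x hx ε hε
  obtain ⟨b, hb, hdb⟩ := hx ε hε
  obtain ⟨a, ha, hda⟩ := hb ε hε
  exact ⟨a, ha, lt_of_le_of_lt (deltaDist_triangle x b a) (max_lt hdb hda)⟩

lemma mem_deltaClosure_iff {A : Set (Config d)} {x : Config d} :
    x ∈ deltaClosure A ↔ ∀ k : ℕ, ∃ a ∈ A, ∀ n : ZD d, normInf n ≤ k → x n = a n := by
  constructor
  · intro hx k
    obtain ⟨a, ha, hd⟩ := hx ((2:ℝ) ^ (-(k:ℤ))) (two_zpow_pos _)
    exact ⟨a, ha, eq_on_box_of_deltaDist_lt hd⟩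
  · intro h ε hε
    obtain ⟨k, hk⟩ := exists_two_zpow_lt hε
    obtain ⟨a, ha, hagree⟩ := h k
    refine ⟨a, ha, lt_of_le_of_lt (le_trans (deltaDist_le_of_eq_on_box hagree) (two_zpow_mono (by omega))) hk⟩

lemma deltaClosure_union_subset {A B : Set (Config d)} :
    deltaClosure (A ∪ B) ⊆ deltaClosure A ∪ deltaClosure B := by
  intro x hx
  by_cases hA : x ∈ deltaClosure A
  · exact Or.inl hA
  · right
    simp only [deltaClosure, Set.mem_setOf_eq] at hA
    push_neg at hA
    obtain ⟨ε₁, hε₁, hfar⟩ := hA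
    intro ε hε
    obtain ⟨c, hc, hd⟩ := hx (min ε ε₁) (lt_min hε hε₁)
    rcases hc with hc | hc
    · exact absurd (lt_of_lt_of_le hd (min_le_right _ _)) (not_lt.2 (hfar c hc))
    · exact ⟨c, hc, lt_of_lt_of_le hd (min_le_left _ _)⟩

-- shift lemmas
lemma shiftMap_shiftMap (u w : ZD d) (x : Config d) :
    shiftMap u (shiftMap w x) = shiftMap (w + u) x := by
  funext v
  simp [shiftMap, add_assoc]

lemma shiftMap_eq_on_box {x a : Config d} {k : ℕ} (u : ZD d)
    (h : ∀ n : ZD d, normInf n ≤ k + normInf u → x n = a n) :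
    ∀ n : ZD d, normInf n ≤ k → shiftMap u x n = shiftMap u a n := by
  intro n hn
  apply h
  calc normInf (u + n) ≤ normInf u + normInf n := normInf_add_le u n
  _ ≤ k + normInf u := by omega

lemma deltaClosure_shift_invariant {A : Set (Config d)}
    (hA : ∀ u : ZD d, ∀ a ∈ A, shiftMap u a ∈ A) :
    ∀ u : ZD d, ∀ x ∈ deltaClosure A, shiftMap u x ∈ deltaClosure A := by
  intro u x hx
  rw [mem_deltaClosure_iff] at hx ⊢
  intro k
  obtain ⟨a, ha, hagree⟩ := hx (k + normInf u)
  exact ⟨shiftMap u a, hA u a ha, shiftMap_eq_on_box u hagree⟩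

end Lemmas

section Hausdorff
variable {d : ℕ} {X Z : Set (Config d)} {ε c : ℝ}

lemma deltaH_lt_of_close (hX : X.Nonempty) (hZ : Z.Nonempty) (hcε : c < ε)
    (h1 : ∀ x ∈ X, ∃ z ∈ Z, deltaDist x z ≤ c)
    (h2 : ∀ z ∈ Z, ∃ x ∈ X, deltaDist x z ≤ c) : deltaH X Z < ε := by
  have hbb : ∀ (x : Config d), BddBelow (Set.range fun z : Z => deltaDist x z) := by
    rintro x
    exact ⟨0, by rintro _ ⟨z, rfl⟩; exact deltaDist_nonneg _ _⟩
  have hbb' : ∀ (z : Config d), BddBelow (Set.range fun x : X => deltaDist (x : Config d) z) := by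
    rintro z
    exact ⟨0, by rintro _ ⟨x, rfl⟩; exact deltaDist_nonneg _ _⟩
  haveI := hX.to_subtype
  haveI := hZ.to_subtype
  rw [deltaH]
  apply max_lt
  · apply lt_of_le_of_lt _ hcε
    apply ciSup_le
    intro x
    obtain ⟨z, hz, hd⟩ := h1 x x.2
    exact le_trans (ciInf_le (hbb x) ⟨z, hz⟩) hd
  · apply lt_of_le_of_lt _ hcε
    apply ciSup_le
    intro z
    obtain ⟨x, hx, hd⟩ := h2 z z.2
    exact le_trans (ciInf_le (hbb' z) ⟨x, hx⟩) hd

lemma close_left_of_deltaH_lt (h : deltaH X Z < ε) (hZ : Z.Nonempty) :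
    ∀ x ∈ X, ∃ z ∈ Z, deltaDist x z < ε := by
  intro x hx
  haveI := hZ.to_subtype
  have h1 : (⨆ x : X, ⨅ z : Z, deltaDist (x : Config d) z) < ε := (max_lt_iff.1 h).1
  have hba : BddAbove (Set.range fun x : X => ⨅ z : Z, deltaDist (x : Config d) z) := by
    refine ⟨1, ?_⟩
    rintro _ ⟨x', rfl⟩
    obtain ⟨z₀⟩ := ‹Nonempty Z›
    refine le_trans (ciInf_le ⟨0, ?_⟩ z₀) (deltaDist_le_one _ _)
    rintro _ ⟨z, rfl⟩; exact deltaDist_nonneg _ _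
  have h2 : (⨅ z : Z, deltaDist x z) < ε :=
    lt_of_le_of_lt (le_ciSup hba (⟨x, hx⟩ : X)) h1
  obtain ⟨z, hz⟩ := exists_lt_of_ciInf_lt h2
  exact ⟨z, z.2, hz⟩

lemma close_right_of_deltaH_lt (h : deltaH X Z < ε) (hX : X.Nonempty) :
    ∀ z ∈ Z, ∃ x ∈ X, deltaDist x z < ε := by
  intro z hz
  haveI := hX.to_subtype
  have h1 : (⨆ z : Z, ⨅ x : X, deltaDist (x : Config d) z) < ε := (max_lt_iff.1 h).2
  have hba : BddAbove (Set.range fun z : Z => ⨅ x : X, deltaDist (x : Config d) z) := by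
    refine ⟨1, ?_⟩
    rintro _ ⟨z', rfl⟩
    obtain ⟨x₀⟩ := ‹Nonempty X›
    refine le_trans (ciInf_le ⟨0, ?_⟩ x₀) (deltaDist_le_one _ _)
    rintro _ ⟨x, rfl⟩; exact deltaDist_nonneg _ _
  have h2 : (⨅ x : X, deltaDist (x : Config d) z) < ε :=
    lt_of_le_of_lt (le_ciSup hba (⟨z, hz⟩ : Z)) h1
  obtain ⟨x, hx⟩ := exists_lt_of_ciInf_lt h2
  exact ⟨x, x.2, hx⟩

end Hausdorff

section Structure
variable {d : ℕ}

/-- The box of radius `K` in `ℤ^d` as a finset. -/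
noncomputable def boxF (d K : ℕ) : Finset (ZD d) := Fintype.piFinset fun _ => Finset.Icc (-(K:ℤ)) K

lemma mem_boxF {K : ℕ} {n : ZD d} : n ∈ boxF d K ↔ normInf n ≤ K := by
  rw [boxF, Fintype.mem_piFinset]
  unfold normInf
  rw [Finset.sup_le_iff]
  constructor
  · intro h i _
    have := h i
    rw [Finset.mem_Icc] at this
    omega
  · intro h i
    have := h i (Finset.mem_univ i)
    rw [Finset.mem_Icc]
    omega

/-- Subsystems of a shift are shifts. -/
lemma IsSubsystem.isShift {Z X : Set (Config d)} (hZ : IsSubsystem Z X) (hX : IsShift X) :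
    IsShift Z := by
  obtain ⟨A, hA⟩ := hX.2.1
  exact ⟨hZ.1, ⟨A, fun z hz => hA z (hZ.2.1 hz)⟩, hZ.2.2.1, hZ.2.2.2⟩

lemma IsShift.isSubsystem_self {X : Set (Config d)} (hX : IsShift X) : IsSubsystem X X :=
  ⟨hX.1, subset_rfl, hX.2.2.1, hX.2.2.2⟩

/-- A shift contained in another shift is a subsystem of it. -/
lemma isSubsystem_of_isShift_subset {Z X : Set (Config d)} (hZ : IsShift Z) (hsub : Z ⊆ X) :
    IsSubsystem Z X := ⟨hZ.1, hsub, hZ.2.2.1, hZ.2.2.2⟩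

/-- The union of two subsystems is a subsystem. -/
lemma IsSubsystem.union {Z W X : Set (Config d)} (hZ : IsSubsystem Z X) (hW : IsSubsystem W X) :
    IsSubsystem (Z ∪ W) X := by
  refine ⟨hZ.1.mono Set.subset_union_left, Set.union_subset hZ.2.1 hW.2.1, ?_, ?_⟩
  · intro x hx
    rcases deltaClosure_union_subset hx with h | h
    · exact Or.inl (hZ.2.2.1 h)
    · exact Or.inr (hW.2.2.1 h)
  · rintro u x (hx | hx)
    · exact Or.inl (hZ.2.2.2 u x hx)
    · exact Or.inr (hW.2.2.2 u x hx)

/-- A finite net for a shift at resolution `K`. -/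
lemma exists_finite_net {X : Set (Config d)} (hX : IsShift X) (K : ℕ) :
    ∃ T : Set (Config d), T.Finite ∧ T ⊆ X ∧
      ∀ x ∈ X, ∃ t ∈ T, ∀ n : ZD d, normInf n ≤ K → x n = t n := by
  classical
  obtain ⟨A, hA⟩ := hX.2.1
  set ρ : Config d → (↥(boxF d K) → ℤ) := fun x v => x v with hρ
  have him : (ρ '' X).Finite := by
    apply Set.Finite.subset (Set.Finite.pi (fun _ : ↥(boxF d K) => A.finite_toSet))
    rintro _ ⟨x, hx, rfl⟩
    intro v _
    exact hA x hx v
  set g : (↥(boxF d K) → ℤ) → Config d := fun f =>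
    if h : ∃ x ∈ X, ρ x = f then h.choose else fun _ => 0 with hg
  refine ⟨g '' (ρ '' X), him.image g, ?_, ?_⟩
  · rintro _ ⟨f, hf, rfl⟩
    have h : ∃ x ∈ X, ρ x = f := by
      obtain ⟨x, hx, rfl⟩ := hf
      exact ⟨x, hx, rfl⟩
    rw [hg]; simp only [dif_pos h]
    exact h.choose_spec.1
  · intro x hx
    have hmem : ρ x ∈ ρ '' X := ⟨x, hx, rfl⟩
    refine ⟨g (ρ x), ⟨ρ x, hmem, rfl⟩, ?_⟩
    intro n hn
    have h : ∃ x' ∈ X, ρ x' = ρ x := ⟨x, hx, rfl⟩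
    have hspec := h.choose_spec.2
    have : g (ρ x) = h.choose := by rw [hg]; simp only [dif_pos h]
    rw [this]
    have := congrFun hspec (⟨n, mem_boxF.2 hn⟩ : ↥(boxF d K))
    exact this.symm

/-- In a chain, finitely many members have a common upper bound in the chain. -/
lemma chain_finset_bound {C : Set (Set (Config d))} (hC : IsChain (· ⊆ ·) C)
    (hne : C.Nonempty) (s : Finset (Set (Config d))) (hs : ↑s ⊆ C) :
    ∃ W ∈ C, ∀ Z ∈ s, Z ⊆ W := by
  classical
  induction s using Finset.induction_on with
  | empty => exact ⟨hne.choose, hne.choose_spec, by simp⟩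
  | @insert a s hna ih =>
    have hsC : ↑s ⊆ C := by
      intro z hz
      exact hs (by simp [hz])
    have haC : a ∈ C := hs (by simp)
    obtain ⟨W, hWC, hWub⟩ := ih hsC
    rcases eq_or_ne a W with rfl | hne'
    · exact ⟨a, haC, by
        intro Z hZ
        rcases Finset.mem_insert.1 hZ with rfl | hZ
        · exact subset_rfl
        · exact hWub Z hZ⟩
    · rcases hC haC hWC hne' with h | h
      · refine ⟨W, hWC, ?_⟩
        intro Z hZ
        rcases Finset.mem_insert.1 hZ with rfl | hZ
        · exact h
        · exact hWub Z hZ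
      · refine ⟨a, haC, ?_⟩
        intro Z hZ
        rcases Finset.mem_insert.1 hZ with rfl | hZ
        · exact subset_rfl
        · exact (hWub Z hZ).trans h

/-- Pattern appearance is shift-invariant. -/
lemma patternAppears_shift {U : Finset (ZD d)} {p : ZD d → ℤ} {x : Config d} {u : ZD d}
    (h : PatternAppears U p (shiftMap u x)) : PatternAppears U p x := by
  obtain ⟨w, hw⟩ := h
  refine ⟨u + w, fun v hv => ?_⟩
  have := hw v hv
  rw [shiftMap] at this
  rw [← this, add_assoc]

/-- `XofF A F` is closed. -/
lemma isDeltaClosed_XofF (A : Finset ℤ) (F : Set (Finset (ZD d) × (ZD d → ℤ))) :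
    IsDeltaClosed (XofF A F) := by
  intro x hx
  rw [mem_deltaClosure_iff] at hx
  constructor
  · intro v
    obtain ⟨a, ha, hagree⟩ := hx (normInf v)
    rw [hagree v le_rfl]
    exact ha.1 v
  · rintro q hq ⟨u, hu⟩
    set R := q.1.sup (fun v => normInf (u + v)) with hR
    obtain ⟨a, ha, hagree⟩ := hx R
    refine ha.2 q hq ⟨u, fun v hv => ?_⟩
    rw [← hagree (u + v) (Finset.le_sup (f := fun v => normInf (u + v)) hv)]
    exact hu v hv

/-- `XofF A F` is shift-invariant. -/
lemma shift_invariant_XofF (A : Finset ℤ) (F : Set (Finset (ZD d) × (ZD d → ℤ))) :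
    ∀ u : ZD d, ∀ x ∈ XofF A F, shiftMap u x ∈ XofF A F := by
  intro u x hx
  constructor
  · intro v
    exact hx.1 (u + v)
  · intro q hq happ
    exact hx.2 q hq (patternAppears_shift happ)

lemma isShift_XofF {A : Finset ℤ} {F : Set (Finset (ZD d) × (ZD d → ℤ))}
    (hne : (XofF A F).Nonempty) : IsShift (XofF A F) :=
  ⟨hne, ⟨A, fun x hx v => hx.1 v⟩, isDeltaClosed_XofF A F, shift_invariant_XofF A F⟩

end Structure

section Main
variable {d : ℕ}

lemma isolated_to_SFT {X : Set (Config d)} (hX : IsShift X)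
    (hiso : IsolatedIn {Y : Set (Config d) | IsShift Y} X) : IsSFT X := by
  classical
  obtain ⟨-, ε, hε, hclose⟩ := hiso
  obtain ⟨A, hA⟩ := hX.2.1
  obtain ⟨k, hk⟩ := exists_two_zpow_lt hε
  set Bk := boxF d k with hBk
  set ext : (↥Bk → ℤ) → (ZD d → ℤ) := fun f v => if h : v ∈ Bk then f ⟨v, h⟩ else 0 with hext
  set CandF : Finset (ZD d → ℤ) := (Fintype.piFinset fun _ : ↥Bk => A).image ext with hCandF
  set F : Finset (Finset (ZD d) × (ZD d → ℤ)) :=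
    (CandF.filter (fun p => ∀ x ∈ X, ¬ PatternAppears Bk p x)).image (fun p => (Bk, p)) with hF
  have hXsub : X ⊆ XofF A ↑F := by
    intro x hx
    refine ⟨hA x hx, ?_⟩
    intro q hq
    rw [Finset.mem_coe, hF, Finset.mem_image] at hq
    obtain ⟨p, hp, rfl⟩ := hq
    rw [Finset.mem_filter] at hp
    exact hp.2 x hx
  have hYne : (XofF A (↑F : Set _)).Nonempty := hX.1.mono hXsub
  have hYshift : IsShift (XofF A (↑F : Set (Finset (ZD d) × (ZD d → ℤ)))) := isShift_XofF hYne
  have hclose2 : ∀ y ∈ XofF A (↑F : Set _), ∃ x ∈ X, deltaDist x y ≤ (2:ℝ) ^ (-((k:ℤ)+1)) := by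
    intro y hy
    set f : ↥Bk → ℤ := fun v => y v with hf
    have hfA : f ∈ Fintype.piFinset fun _ : ↥Bk => A := by
      rw [Fintype.mem_piFinset]
      intro v
      exact hy.1 v
    have hpC : ext f ∈ CandF := Finset.mem_image_of_mem ext hfA
    have hpy : ∀ v ∈ Bk, ext f v = y v := by
      intro v hv
      rw [hext]
      simp only [dif_pos hv]
      rfl
    have happ_y : PatternAppears Bk (ext f) y := by
      refine ⟨0, fun v hv => ?_⟩
      rw [zero_add, hpy v hv]
    have hnotfilter : ¬ (∀ x ∈ X, ¬ PatternAppears Bk (ext f) x) := by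
      intro hcon
      have : (Bk, ext f) ∈ F := by
        rw [hF, Finset.mem_image]
        exact ⟨ext f, Finset.mem_filter.2 ⟨hpC, hcon⟩, rfl⟩
      exact hy.2 (Bk, ext f) this happ_y
    push_neg at hnotfilter
    obtain ⟨x, hxX, u, hu⟩ := hnotfilter
    refine ⟨shiftMap u x, hX.2.2.2 u x hxX, ?_⟩
    apply deltaDist_le_of_eq_on_box
    intro n hn
    have hnB : n ∈ Bk := mem_boxF.2 hn
    calc shiftMap u x n = ext f n := hu n hnB
    _ = y n := hpy n hnB
  have hd : deltaH X (XofF A ↑F) < ε := by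
    apply deltaH_lt_of_close hX.1 hYne
      (lt_of_le_of_lt (two_zpow_mono (by omega : (k:ℤ) ≤ (k:ℤ)+1)) hk)
    · intro x hx
      exact ⟨x, hXsub hx, by rw [deltaDist_self]; positivity⟩
    · exact hclose2
  exact ⟨A, F, (hclose _ hYshift hd).symm⟩

lemma isolated_to_noOutcast {X : Set (Config d)} (hX : IsShift X)
    (hiso : IsolatedIn {Y : Set (Config d) | IsShift Y} X) :
    ∀ Z : Set (Config d), IsSubsystem Z X → Z ≠ X →
      ∃ M : Set (Config d), IsMaximalSubsystem M X ∧ Z ⊆ M := by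
  classical
  obtain ⟨-, ε, hε, hclose⟩ := hiso
  intro Z hZ hZne
  set P := {Z' : Set (Config d) | IsSubsystem Z' X ∧ Z' ≠ X ∧ Z ⊆ Z'} with hP
  have hZP : Z ∈ P := ⟨hZ, hZne, subset_rfl⟩
  have hchain : ∀ c ⊆ P, IsChain (· ⊆ ·) c → c.Nonempty → ∃ ub ∈ P, ∀ s ∈ c, s ⊆ ub := by
    intro c hcP hc hcne
    set U := deltaClosure (⋃₀ c) with hU
    have hsUX : ⋃₀ c ⊆ X := by
      intro x hx
      obtain ⟨W, hWc, hxW⟩ := hx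
      exact (hcP hWc).1.2.1 hxW
    have hUX : U ⊆ X := fun x hx => hX.2.2.1 (deltaClosure_mono hsUX hx)
    have hUne : U.Nonempty := by
      obtain ⟨W, hWc⟩ := hcne
      obtain ⟨w, hw⟩ := (hcP hWc).1.1
      exact ⟨w, subset_deltaClosure _ ⟨W, hWc, hw⟩⟩
    have hUinv : ∀ u : ZD d, ∀ x ∈ U, shiftMap u x ∈ U := by
      apply deltaClosure_shift_invariant
      rintro u a ⟨W, hWc, haW⟩
      exact ⟨W, hWc, (hcP hWc).1.2.2.2 u a haW⟩
    have hUsubsys : IsSubsystem U X := ⟨hUne, hUX, isDeltaClosed_deltaClosure _, hUinv⟩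
    have hZU : Z ⊆ U := by
      obtain ⟨W, hWc⟩ := hcne
      exact ((hcP hWc).2.2).trans ((Set.subset_sUnion_of_mem hWc).trans (subset_deltaClosure _))
    have hUneX : U ≠ X := by
      intro hUX'
      obtain ⟨k, hk⟩ := exists_two_zpow_lt hε
      obtain ⟨T, hTfin, hTX, hTnet⟩ := exists_finite_net hX k
      set Wfun : Config d → Set (Config d) := fun t =>
        if h : ∃ W ∈ c, ∃ a ∈ W, ∀ n : ZD d, normInf n ≤ k → t n = a n then h.choose else ∅
        with hWfun
      have hWfun_spec : ∀ t ∈ T, Wfun t ∈ c ∧ ∃ a ∈ Wfun t, ∀ n : ZD d, normInf n ≤ k → t n = a n := by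
        intro t ht
        have htU : t ∈ U := hUX' ▸ hTX ht
        rw [hU, mem_deltaClosure_iff] at htU
        obtain ⟨a, ⟨W, hWc, haW⟩, hagree⟩ := htU k
        have hex : ∃ W ∈ c, ∃ a ∈ W, ∀ n : ZD d, normInf n ≤ k → t n = a n :=
          ⟨W, hWc, a, haW, hagree⟩
        rw [hWfun]
        simp only [dif_pos hex]
        exact ⟨hex.choose_spec.1, hex.choose_spec.2⟩
      set s : Finset (Set (Config d)) := hTfin.toFinset.image Wfun with hs
      have hsc : ↑s ⊆ c := by
        intro W hW
        rw [hs, Finset.coe_image] at hW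
        obtain ⟨t, ht, rfl⟩ := hW
        rw [Set.Finite.coe_toFinset] at ht
        exact (hWfun_spec t ht).1
      obtain ⟨W, hWc, hWub⟩ := chain_finset_bound hc hcne s hsc
      have hWP := hcP hWc
      have hWclose : ∀ x ∈ X, ∃ w ∈ W, deltaDist x w ≤ (2:ℝ) ^ (-((k:ℤ)+1)) := by
        intro x hx
        obtain ⟨t, htT, hxt⟩ := hTnet x hx
        obtain ⟨hWtc, a, haWt, hta⟩ := hWfun_spec t htT
        have haW : a ∈ W := by
          apply hWub (Wfun t) _ haWt
          rw [hs, Finset.mem_image]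
          exact ⟨t, (Set.Finite.mem_toFinset hTfin).2 htT, rfl⟩
        refine ⟨a, haW, ?_⟩
        calc deltaDist x a ≤ max (deltaDist x t) (deltaDist t a) := deltaDist_triangle x t a
        _ ≤ (2:ℝ) ^ (-((k:ℤ)+1)) :=
          max_le (deltaDist_le_of_eq_on_box hxt) (deltaDist_le_of_eq_on_box hta)
      have hdH : deltaH X W < ε := by
        apply deltaH_lt_of_close hX.1 hWP.1.1
          (lt_of_le_of_lt (two_zpow_mono (by omega : (k:ℤ) ≤ (k:ℤ)+1)) hk)
        · exact hWclose
        · intro w hw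
          exact ⟨w, hWP.1.2.1 hw, by rw [deltaDist_self]; positivity⟩
      exact hWP.2.1 (hclose W (hWP.1.isShift hX) hdH)
    refine ⟨U, ⟨hUsubsys, hUneX, hZU⟩, ?_⟩
    intro W hWc
    exact (Set.subset_sUnion_of_mem hWc).trans (subset_deltaClosure _)
  obtain ⟨M, hZM, hMmax⟩ := zorn_subset_nonempty P hchain Z hZP
  have hMP : M ∈ P := hMmax.1
  refine ⟨M, ⟨hMP.1, hMP.2.1, ?_⟩, hZM⟩
  intro Z' hZ' hMZ'
  by_contra hZ'X
  have hZ'P : Z' ∈ P := ⟨hZ', hZ'X, hMP.2.2.trans hMZ'.1⟩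
  exact hMZ'.2 (hMmax.2 hZ'P hMZ'.1)

lemma maximal_union {X M₁ M₂ : Set (Config d)}
    (h1 : IsMaximalSubsystem M₁ X) (h2 : IsMaximalSubsystem M₂ X) (hne : M₁ ≠ M₂) :
    M₁ ∪ M₂ = X := by
  have hsub : IsSubsystem (M₁ ∪ M₂) X := h1.1.union h2.1
  have hstrict : M₁ ⊂ M₁ ∪ M₂ := by
    refine ⟨Set.subset_union_left, ?_⟩
    intro hcon
    have hM21 : M₂ ⊆ M₁ := Set.subset_union_right.trans hcon
    have hM12 : ¬ M₁ ⊆ M₂ := fun h => hne (subset_antisymm h hM21)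
    exact h1.2.1 (h2.2.2 M₁ h1.1 ⟨hM21, hM12⟩)
  exact h1.2.2 _ hsub hstrict

lemma isolated_to_finiteMax {X : Set (Config d)} (hX : IsShift X)
    (hiso : IsolatedIn {Y : Set (Config d) | IsShift Y} X) :
    {Z : Set (Config d) | IsMaximalSubsystem Z X}.Finite := by
  classical
  by_contra hinf
  rw [← Set.not_infinite, not_not] at hinf
  obtain ⟨-, ε, hε, hclose⟩ := hiso
  obtain ⟨k, hk⟩ := exists_two_zpow_lt hε
  obtain ⟨T, hTfin, hTX, hTnet⟩ := exists_finite_net hX k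
  set e := hinf.natEmbedding with he
  set M : ℕ → Set (Config d) := fun n => (e n : Set (Config d)) with hM
  have hMmax : ∀ n, IsMaximalSubsystem (M n) X := fun n => (e n).2
  have hMinj : Function.Injective M := fun n m h => e.injective (Subtype.ext h)
  set Bad := {n : ℕ | ∃ t ∈ T, t ∉ M n} with hBad
  set tfun : ℕ → Config d := fun n =>
    if h : ∃ t ∈ T, t ∉ M n then h.choose else fun _ => 0 with htfun
  have htfun_spec : ∀ n ∈ Bad, tfun n ∈ T ∧ tfun n ∉ M n := by
    intro n hn
    have hn' : ∃ t ∈ T, t ∉ M n := hn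
    rw [htfun]
    simp only [dif_pos hn']
    exact ⟨hn'.choose_spec.1, hn'.choose_spec.2⟩
  have hBadInj : Set.InjOn tfun Bad := by
    intro n hn m hm hnm
    by_contra hne
    have h1 := htfun_spec n hn
    have h2 := htfun_spec m hm
    have hu : M n ∪ M m = X :=
      maximal_union (hMmax n) (hMmax m) (fun h => hne (hMinj h))
    have : tfun n ∈ X := hTX h1.1
    rw [← hu] at this
    rcases this with h | h
    · exact h1.2 h
    · exact h2.2 (hnm ▸ h)
  have hBadFin : Bad.Finite := by
    apply Set.Finite.of_finite_image _ hBadInj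
    exact hTfin.subset (by rintro _ ⟨n, hn, rfl⟩; exact (htfun_spec n hn).1)
  obtain ⟨n, hn⟩ := hBadFin.infinite_compl.nonempty
  have hgood : ∀ t ∈ T, t ∈ M n := by
    intro t ht
    by_contra hcon
    exact hn ⟨t, ht, hcon⟩
  have hdH : deltaH X (M n) < ε := by
    apply deltaH_lt_of_close hX.1 (hMmax n).1.1
      (lt_of_le_of_lt (two_zpow_mono (by omega : (k:ℤ) ≤ (k:ℤ)+1)) hk)
    · intro x hx
      obtain ⟨t, htT, hxt⟩ := hTnet x hx
      exact ⟨t, hgood t htT, deltaDist_le_of_eq_on_box hxt⟩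
    · intro z hz
      exact ⟨z, (hMmax n).1.2.1 hz, by rw [deltaDist_self]; positivity⟩
  exact (hMmax n).2.1 (hclose (M n) ((hMmax n).1.isShift hX) hdH)

lemma maximal_gap {X M : Set (Config d)} (hM : IsMaximalSubsystem M X) :
    ∃ δ : ℝ, 0 < δ ∧ ∃ x ∈ X, ∀ m ∈ M, δ ≤ deltaDist x m := by
  have hssub : M ⊂ X := ⟨hM.1.2.1, fun h => hM.2.1 (subset_antisymm hM.1.2.1 h)⟩
  obtain ⟨x, hxX, hxM⟩ := Set.exists_of_ssubset hssub
  have hxcl : x ∉ deltaClosure M := fun h => hxM (hM.1.2.2.1 h)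
  simp only [deltaClosure, Set.mem_setOf_eq] at hxcl
  push_neg at hxcl
  obtain ⟨δ, hδ, hfar⟩ := hxcl
  exact ⟨δ, hδ, x, hxX, hfar⟩

lemma backward_direction {X : Set (Config d)} (hX : IsShift X) (hSFT : IsSFT X)
    (hfin : {Z : Set (Config d) | IsMaximalSubsystem Z X}.Finite)
    (hout : ∀ Z : Set (Config d), IsSubsystem Z X → Z ≠ X →
      ∃ M : Set (Config d), IsMaximalSubsystem M X ∧ Z ⊆ M) :
    IsolatedIn {Y : Set (Config d) | IsShift Y} X := by
  classical
  obtain ⟨A, F, hXF⟩ := hSFT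
  set k : ℕ := F.sup (fun q => q.1.sup normInf) with hk
  set Q : Set (Config d) → Prop := fun M =>
    ∃ δ : ℝ, 0 < δ ∧ ∃ x ∈ X, ∀ m ∈ M, δ ≤ deltaDist x m with hQ
  set gapf : Set (Config d) → ℝ := fun M => if h : Q M then h.choose else 1 with hgapf
  have hgapf_pos : ∀ M, 0 < gapf M := by
    intro M
    rw [hgapf]
    by_cases h : Q M
    · simp only [dif_pos h]
      exact h.choose_spec.1
    · simp only [dif_neg h]
      norm_num
  have hgapf_spec : ∀ M, Q M → ∃ x ∈ X, ∀ m ∈ M, gapf M ≤ deltaDist x m := by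
    intro M h
    rw [hgapf]
    simp only [dif_pos h]
    exact h.choose_spec.2
  set s : Finset ℝ := insert ((2:ℝ) ^ (-(k:ℤ))) (hfin.toFinset.image gapf) with hs
  have hsne : s.Nonempty := ⟨_, Finset.mem_insert_self _ _⟩
  set ε : ℝ := s.min' hsne with hε
  have hεpos : 0 < ε := by
    have hmem := Finset.min'_mem s hsne
    rw [← hε] at hmem
    rw [hs] at hmem
    rcases Finset.mem_insert.1 hmem with h | h
    · rw [hε] at *
      rw [h]
      positivity
    · obtain ⟨M, _, hMe⟩ := Finset.mem_image.1 h
      rw [← hMe]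
      exact hgapf_pos M
  have hεk : ε ≤ (2:ℝ) ^ (-(k:ℤ)) := Finset.min'_le s _ (Finset.mem_insert_self _ _)
  refine ⟨hX, ε, hεpos, ?_⟩
  intro Z hZshift hdH
  have hZne : Z.Nonempty := hZshift.1
  have hZX : Z ⊆ X := by
    intro z hz
    rw [hXF]
    constructor
    · intro v
      have hzv : shiftMap v z ∈ Z := hZshift.2.2.2 v z hz
      obtain ⟨x, hxX, hxd⟩ := close_right_of_deltaH_lt hdH hX.1 _ hzv
      have hagree := eq_on_box_of_deltaDist_lt (lt_of_lt_of_le hxd hεk) 0 (by rw [normInf_zero]; omega)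
      have : shiftMap v z 0 = z v := by rw [shiftMap, add_zero]
      rw [← this, ← hagree]
      have hx' : x ∈ XofF A ↑F := hXF ▸ hxX
      exact hx'.1 0
    · rintro q hq ⟨u, hu⟩
      have hzu : shiftMap u z ∈ Z := hZshift.2.2.2 u z hz
      obtain ⟨x, hxX, hxd⟩ := close_right_of_deltaH_lt hdH hX.1 _ hzu
      have hagree := eq_on_box_of_deltaDist_lt (lt_of_lt_of_le hxd hεk)
      have hx' : x ∈ XofF A ↑F := hXF ▸ hxX
      refine hx'.2 q hq ⟨0, fun v hv => ?_⟩
      have hvk : normInf v ≤ k := by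
        calc normInf v ≤ q.1.sup normInf := Finset.le_sup hv
        _ ≤ k := Finset.le_sup (f := fun q => q.1.sup normInf) hq
      rw [zero_add, hagree v hvk]
      show shiftMap u z v = q.2 v
      exact hu v hv
  by_contra hZXne
  have hZsub : IsSubsystem Z X := isSubsystem_of_isShift_subset hZshift hZX
  obtain ⟨M, hMmax, hZM⟩ := hout Z hZsub hZXne
  have hQM : Q M := maximal_gap hMmax
  obtain ⟨x, hxX, hxfar⟩ := hgapf_spec M hQM
  obtain ⟨z, hzZ, hzd⟩ := close_left_of_deltaH_lt hdH hZne x hxX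
  have hεgap : ε ≤ gapf M := by
    apply Finset.min'_le
    rw [hs]
    apply Finset.mem_insert_of_mem
    exact Finset.mem_image_of_mem gapf ((Set.Finite.mem_toFinset hfin).2 hMmax)
  exact absurd hzd (not_lt.2 (le_trans hεgap (hxfar z (hZM hzZ))))

end Main

/-- A `d`-dimensional shift `X` is an isolated point of the space `S^d`
(with the Hausdorff metric) iff `X` is of finite type, has finitely many maximal
subsystems, and has no outcast (every proper subsystem is contained in a maximal one). -/
theorem isolated_iff_SFT_finitelyManyMaximal_noOutcast
    (d : ℕ) (hd : 1 ≤ d) (X : Set (Config d)) (hX : IsShift X) :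
    IsolatedIn {Y : Set (Config d) | IsShift Y} X ↔
      IsSFT X ∧ {Z : Set (Config d) | IsMaximalSubsystem Z X}.Finite ∧
        ∀ Z : Set (Config d), IsSubsystem Z X → Z ≠ X →
          ∃ M : Set (Config d), IsMaximalSubsystem M X ∧ Z ⊆ M := by
  constructor
  · intro hiso
    exact ⟨isolated_to_SFT hX hiso, isolated_to_finiteMax hX hiso,
      isolated_to_noOutcast hX hiso⟩
  · rintro ⟨h1, h2, h3⟩
    exact backward_direction hX h1 h2 h3
end

section
/- For every integer d > 1 and every n ∈ ℕ, there exists a d-dimensional shift of finite type having exactly n maximal subsystems; moreover, there exists a d-dimensional shift of finite type having infinitely (countably) many maximal subsystems. -/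
namespace Aux

variable {d : ℕ}

lemma natAbs_le_normInf (v : ZD d) (i : Fin d) : (v i).natAbs ≤ normInf v :=
  Finset.le_sup (f := fun i => (v i).natAbs) (Finset.mem_univ i)

lemma normInf_le_iff {v : ZD d} {k : ℕ} : normInf v ≤ k ↔ ∀ i, (v i).natAbs ≤ k := by
  simp [normInf, Finset.sup_le_iff]

lemma exists_zpow_lt {ε : ℝ} (hε : 0 < ε) : ∃ n : ℕ, (2:ℝ)^(-(n:ℤ)) < ε := by
  obtain ⟨n, hn⟩ := exists_pow_lt_of_lt_one hε (by norm_num : (1/2:ℝ) < 1)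
  rw [div_pow, one_pow] at hn
  exact ⟨n, by rwa [zpow_neg, zpow_natCast, ← one_div]⟩

lemma two_zpow_pos (m : ℤ) : (0:ℝ) < (2:ℝ) ^ m := zpow_pos (by norm_num) m

lemma two_zpow_le {a b : ℤ} (h : a ≤ b) : (2:ℝ) ^ a ≤ (2:ℝ) ^ b :=
  zpow_le_zpow_right₀ (by norm_num) h

lemma two_zpow_lt {a b : ℤ} (h : a < b) : (2:ℝ) ^ a < (2:ℝ) ^ b :=
  zpow_lt_zpow_right₀ (by norm_num) h

lemma deltaDist_agree {x y : Config d} {k : ℕ}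
    (h : deltaDist x y < (2:ℝ)^(-(k:ℤ))) {v : ZD d} (hv : normInf v ≤ k) : x v = y v := by
  by_cases hxy : x = y
  · rw [hxy]
  · rw [deltaDist, if_neg hxy] at h
    by_contra hne
    have hmem : normInf v ∈ {m : ℕ | ∃ n : ZD d, normInf n = m ∧ x n ≠ y n} := ⟨v, rfl, hne⟩
    have h1 : sInf {m : ℕ | ∃ n : ZD d, normInf n = m ∧ x n ≠ y n} ≤ k :=
      le_trans (Nat.sInf_le hmem) hv
    have := two_zpow_le (by exact_mod_cast neg_le_neg (Int.ofNat_le.mpr h1))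
    linarith
lemma deltaDist_le_of_agree {x y : Config d} {k : ℕ}
    (h : ∀ v, normInf v ≤ k → x v = y v) : deltaDist x y ≤ (2:ℝ)^(-(k:ℤ)-1) := by
  by_cases hxy : x = y
  · rw [deltaDist, if_pos hxy]; exact (two_zpow_pos _).le
  · rw [deltaDist, if_neg hxy]
    obtain ⟨n, hne⟩ := Function.ne_iff.mp hxy
    have hSne : {m : ℕ | ∃ n : ZD d, normInf n = m ∧ x n ≠ y n}.Nonempty := ⟨normInf n, n, rfl, hne⟩
    obtain ⟨w, hw, hwne⟩ := Nat.sInf_mem hSne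
    have : ¬ normInf w ≤ k := fun hcon => hwne (h w hcon)
    apply two_zpow_le
    have : k + 1 ≤ sInf {m : ℕ | ∃ n : ZD d, normInf n = m ∧ x n ≠ y n} := by
      rw [← hw]; omega
    omega

lemma mem_deltaClosure_iff {A : Set (Config d)} {x : Config d} :
    x ∈ deltaClosure A ↔ ∀ k : ℕ, ∃ a ∈ A, ∀ v, normInf v ≤ k → x v = a v := by
  constructor
  · intro h k
    obtain ⟨a, ha, hd⟩ := h ((2:ℝ)^(-(k:ℤ))) (two_zpow_pos _)
    exact ⟨a, ha, fun v hv => deltaDist_agree hd hv⟩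
  · intro h ε hε
    obtain ⟨n, hn⟩ := exists_zpow_lt hε
    obtain ⟨a, ha, hagr⟩ := h n
    refine ⟨a, ha, lt_of_le_of_lt (deltaDist_le_of_agree hagr) (lt_trans (two_zpow_lt (by omega)) hn)⟩

lemma deltaClosure_mono {A B : Set (Config d)} (h : A ⊆ B) : deltaClosure A ⊆ deltaClosure B := by
  intro x hx ε hε
  obtain ⟨a, ha, hd⟩ := hx ε hε
  exact ⟨a, h ha, hd⟩

end Aux
namespace Aux
variable {d : ℕ}

lemma shiftMap_apply (u : ZD d) (x : Config d) (v : ZD d) : shiftMap u x v = x (u + v) := rfl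

lemma shiftMap_neg_shift (u : ZD d) (x : Config d) : shiftMap (-u) (shiftMap u x) = x := by
  funext v; simp [shiftMap]

lemma shiftMap_shiftMap (u t : ZD d) (x : Config d) :
    shiftMap u (shiftMap t x) = shiftMap (t + u) x := by
  funext v; simp [shiftMap, add_assoc]

lemma patternAppears_shift {U : Finset (ZD d)} {p : ZD d → ℤ} {u : ZD d} {x : Config d}
    (h : PatternAppears U p (shiftMap u x)) : PatternAppears U p x := by
  obtain ⟨w, hw⟩ := h
  exact ⟨u + w, fun v hv => by rw [add_assoc]; exact hw v hv⟩

lemma appears_transfer {U : Finset (ZD d)} {p : ZD d → ℤ} {y : Config d} {u : ZD d}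
    (hy : ∀ v ∈ U, y (u + v) = p v) (a : Config d)
    (ha : ∀ v, normInf v ≤ U.sup (fun w => normInf (u + w)) → a v = y v) :
    PatternAppears U p a :=
  ⟨u, fun v hv => (ha (u + v) (Finset.le_sup (f := fun w => normInf (u + w)) hv)).trans (hy v hv)⟩

lemma XofF_closed (A : Finset ℤ) (F : Set (Finset (ZD d) × (ZD d → ℤ))) :
    IsDeltaClosed (XofF A F) := by
  intro y hy
  rw [mem_deltaClosure_iff] at hy
  constructor
  · intro v
    obtain ⟨a, ha, hagr⟩ := hy (normInf v)
    rw [hagr v le_rfl]; exact ha.1 v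
  · rintro q hq ⟨u, hu⟩
    obtain ⟨a, ha, hagr⟩ := hy (q.1.sup fun w => normInf (u + w))
    exact ha.2 q hq (appears_transfer hu a fun v hv => (hagr v hv).symm)

lemma XofF_shift (A : Finset ℤ) (F : Set (Finset (ZD d) × (ZD d → ℤ))) (u : ZD d)
    {x : Config d} (hx : x ∈ XofF A F) : shiftMap u x ∈ XofF A F := by
  refine ⟨fun v => hx.1 (u + v), fun q hq happ => hx.2 q hq (patternAppears_shift happ)⟩

lemma avoid_closed (X : Set (Config d)) (hXc : IsDeltaClosed X) (U : Finset (ZD d))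
    (p : ZD d → ℤ) : IsDeltaClosed {y | y ∈ X ∧ ¬ PatternAppears U p y} := by
  intro y hy
  have hyX : y ∈ X := hXc (deltaClosure_mono (fun z hz => hz.1) hy)
  rw [mem_deltaClosure_iff] at hy
  refine ⟨hyX, ?_⟩
  rintro ⟨u, hu⟩
  obtain ⟨a, ha, hagr⟩ := hy (U.sup fun w => normInf (u + w))
  exact ha.2 (appears_transfer hu a fun v hv => (hagr v hv).symm)

-- ===== coordinate vectors and reduction =====
def eV {d : ℕ} (i : Fin d) : ZD d := Pi.single i 1

lemma eV_apply_self (i : Fin d) : eV i i = 1 := Pi.single_eq_same i 1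
lemma eV_apply_ne {i j : Fin d} (h : j ≠ i) : eV (d := d) i j = 0 := Pi.single_eq_of_ne h 1
lemma eV_ne_zero (i : Fin d) : eV (d := d) i ≠ 0 := by
  intro h
  have := congrFun h i
  rw [eV_apply_self] at this
  simp at this

lemma smul_eV_apply (t : ℤ) (i j : Fin d) : (t • eV i) j = if j = i then t else 0 := by
  by_cases h : j = i
  · subst h; simp [eV_apply_self]
  · simp [h, eV_apply_ne h]

lemma add_eV_apply_self (v : ZD d) (i : Fin d) : (v + eV i) i = v i + 1 := by
  simp [eV_apply_self]
lemma add_eV_apply_ne (v : ZD d) {i j : Fin d} (h : j ≠ i) : (v + eV i) j = v j := by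
  simp [eV_apply_ne h]

lemma steps_aux {z : Config d} {i : Fin d} (h : ∀ v, z (v + eV i) = z v) :
    ∀ (t : ℤ) (v : ZD d), z (v + t • eV i) = z v := by
  have hneg : ∀ v, z (v - eV i) = z v := fun v => by
    have := h (v - eV i); rw [sub_add_cancel] at this; exact this.symm
  intro t
  induction t using Int.induction_on with
  | zero => intro v; simp
  | succ k ih =>
      intro v
      have : v + ((k:ℤ)+1) • eV i = (v + (k:ℤ) • eV i) + eV i := by
        rw [add_smul, one_smul, add_assoc]
      rw [this, h, ih]
  | pred k ih =>
      intro v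
      have : v + (-(k:ℤ)-1) • eV i = (v + (-(k:ℤ)) • eV i) - eV i := by
        rw [sub_smul, one_smul, add_sub_assoc]
      rw [this, hneg, ih]

lemma eq_of_agree_off {z : Config d} {i0 : Fin d}
    (h : ∀ (v : ZD d) (i : Fin d), i ≠ i0 → z (v + eV i) = z v)
    (v w : ZD d) (hvw : v i0 = w i0) : z v = z w := by
  classical
  have combo : ∀ (T : Finset (Fin d)), i0 ∉ T → ∀ (c : Fin d → ℤ) (v : ZD d),
      z (v + ∑ i ∈ T, c i • eV i) = z v := by
    intro T
    induction T using Finset.induction_on with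
    | empty => intro _ c v; simp
    | @insert a T ha ih =>
        intro hins c v
        have haT : i0 ∉ T := fun hc => hins (Finset.mem_insert_of_mem hc)
        have hai0 : a ≠ i0 := fun hc => hins (hc ▸ Finset.mem_insert_self a T)
        rw [Finset.sum_insert ha, add_comm (c a • eV a), ← add_assoc]
        have hstep : ∀ v, z (v + eV a) = z v := fun v => h v a hai0
        rw [steps_aux hstep, ih haT]
  set T : Finset (Fin d) := Finset.univ.erase i0 with hT
  have hw : w = v + ∑ i ∈ T, (w i - v i) • eV i := by
    funext j
    simp only [Pi.add_apply, Finset.sum_apply, smul_eV_apply]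
    rw [Finset.sum_ite_eq]
    by_cases hj : j = i0
    · subst hj; simp [hT, hvw]
    · simp [hT, hj]
  rw [hw, combo T (by simp [hT]) _ v]
end Aux
namespace Aux
variable {d : ℕ}

def pairPat (i : Fin d) (a b : ℤ) : Finset (ZD d) × (ZD d → ℤ) :=
  ({0, eV i}, fun v => if v = 0 then a else b)

lemma pairPat_appears {i : Fin d} {a b : ℤ} {x : Config d} :
    PatternAppears (pairPat i a b).1 (pairPat i a b).2 x ↔ ∃ u, x u = a ∧ x (u + eV i) = b := by
  constructor
  · rintro ⟨u, hu⟩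
    have h0 := hu 0 (by simp [pairPat])
    have h1 := hu (eV i) (by simp [pairPat])
    rw [add_zero] at h0
    simp only [pairPat, if_pos rfl] at h0
    simp only [pairPat, if_neg (eV_ne_zero i)] at h1
    exact ⟨u, h0, h1⟩
  · rintro ⟨u, h0, h1⟩
    refine ⟨u, ?_⟩
    intro v hv
    rcases Finset.mem_insert.mp hv with rfl | hv
    · simpa [pairPat] using h0
    · rw [Finset.mem_singleton] at hv; subst hv
      simp only [pairPat, if_neg (eV_ne_zero i)]
      exact h1

open Classical in
noncomputable def pairF (i0 : Fin d) (AA : Finset ℤ) (R : ℤ → ℤ → Prop) :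
    Finset (Finset (ZD d) × (ZD d → ℤ)) :=
  ((AA ×ˢ AA).filter fun ab => ¬ R ab.1 ab.2).image (fun ab => pairPat i0 ab.1 ab.2)
  ∪ ((Finset.univ.erase i0) ×ˢ ((AA ×ˢ AA).filter fun ab => ab.1 ≠ ab.2)).image
      (fun q => pairPat q.1 q.2.1 q.2.2)

lemma mem_XofF_pairF {i0 : Fin d} {AA : Finset ℤ} {R : ℤ → ℤ → Prop} {x : Config d} :
    x ∈ XofF AA (↑(pairF i0 AA R) : Set (Finset (ZD d) × (ZD d → ℤ))) ↔
      (∀ v, x v ∈ AA) ∧ (∀ v, R (x v) (x (v + eV i0))) ∧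
        (∀ (v : ZD d) (i : Fin d), i ≠ i0 → x (v + eV i) = x v) := by
  classical
  constructor
  · rintro ⟨hA, hF⟩
    refine ⟨hA, ?_, ?_⟩
    · intro v
      by_contra hR
      refine hF (pairPat i0 (x v) (x (v + eV i0))) ?_ (pairPat_appears.mpr ⟨v, rfl, rfl⟩)
      exact Finset.mem_coe.mpr (Finset.mem_union_left _ (Finset.mem_image.mpr
        ⟨(x v, x (v + eV i0)),
          Finset.mem_filter.mpr ⟨Finset.mem_product.mpr ⟨hA v, hA _⟩, hR⟩, rfl⟩))
    · intro v i hi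
      by_contra hne
      refine hF (pairPat i (x v) (x (v + eV i))) ?_ (pairPat_appears.mpr ⟨v, rfl, rfl⟩)
      refine Finset.mem_coe.mpr (Finset.mem_union_right _ (Finset.mem_image.mpr
        ⟨(i, (x v, x (v + eV i))), ?_, rfl⟩))
      refine Finset.mem_product.mpr ⟨Finset.mem_erase.mpr ⟨hi, Finset.mem_univ i⟩,
        Finset.mem_filter.mpr ⟨Finset.mem_product.mpr ⟨hA v, hA _⟩, fun hc => hne hc.symm⟩⟩
  · rintro ⟨hA, hR, hinv⟩
    refine ⟨hA, ?_⟩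
    intro q hq happ
    rcases Finset.mem_union.mp (Finset.mem_coe.mp hq) with hq | hq
    · obtain ⟨⟨a, b⟩, hab, rfl⟩ := Finset.mem_image.mp hq
      have hnR := (Finset.mem_filter.mp hab).2
      obtain ⟨u, h0, h1⟩ := pairPat_appears.mp happ
      exact hnR (by rw [← h0, ← h1]; exact hR u)
    · obtain ⟨⟨i, a, b⟩, hmem, rfl⟩ := Finset.mem_image.mp hq
      obtain ⟨hi, hab⟩ := Finset.mem_product.mp hmem
      have hine := (Finset.mem_erase.mp hi).1
      have hne := (Finset.mem_filter.mp hab).2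
      obtain ⟨u, h0, h1⟩ := pairPat_appears.mp happ
      exact hne (by rw [← h0, ← h1]; exact (hinv u i hine).symm)

end Aux
namespace Aux
variable {d : ℕ}

lemma int_induct_down {P : ℤ → Prop} {t0 : ℤ} (h0 : P t0)
    (hstep : ∀ t, t ≤ t0 → P t → P (t-1)) : ∀ t, t ≤ t0 → P t := by
  intro t ht
  have key : ∀ m : ℕ, P (t0 - m) := by
    intro m; induction m with
    | zero => simpa using h0
    | succ k ih =>
        have h := hstep (t0 - k) (by omega) ih
        have : t0 - ((k:ℤ)+1) = t0 - (k:ℤ) - 1 := by ring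
        rw [show ((k+1 : ℕ) : ℤ) = (k:ℤ)+1 by push_cast; ring, this]
        exact h
  have h2 : t = t0 - ((t0 - t).toNat : ℤ) := by omega
  rw [h2]; exact key _

lemma int_induct_up {P : ℤ → Prop} {t0 : ℤ} (h0 : P t0)
    (hstep : ∀ t, t0 ≤ t → P t → P (t+1)) : ∀ t, t0 ≤ t → P t := by
  intro t ht
  have key : ∀ m : ℕ, P (t0 + m) := by
    intro m; induction m with
    | zero => simpa using h0
    | succ k ih =>
        have h := hstep (t0 + k) (by omega) ih
        have : t0 + ((k:ℤ)+1) = t0 + (k:ℤ) + 1 := by ring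
        rw [show ((k+1 : ℕ) : ℤ) = (k:ℤ)+1 by push_cast; ring, this]
        exact h
  have h2 : t = t0 + ((t - t0).toNat : ℤ) := by omega
  rw [h2]; exact key _

-- ===== Construction I =====

def allowedI (n : ℕ) (a b : ℤ) : Prop :=
  (a = 0 ∧ b = 0) ∨ (a = 1 ∧ b = 1) ∨ (a = 0 ∧ 2 ≤ b ∧ b ≤ (n:ℤ)+1) ∨
    (2 ≤ a ∧ a ≤ (n:ℤ)+1 ∧ b = 1)

def cC (d : ℕ) (a : ℤ) : Config d := fun _ => a

def wallCfg (i0 : Fin d) (w k : ℤ) : Config d :=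
  fun v => if v i0 < k then 0 else if v i0 = k then w else 1

noncomputable def XI (d : ℕ) (i0 : Fin d) (n : ℕ) : Set (Config d) :=
  XofF (Finset.Icc 0 ((n:ℤ)+1)) (↑(pairF i0 (Finset.Icc 0 ((n:ℤ)+1)) (allowedI n)))

variable {i0 : Fin d} {n : ℕ}

lemma wallCfg_apply_smul (w k t : ℤ) :
    wallCfg i0 w k (t • eV i0) = if t < k then 0 else if t = k then w else 1 := by
  unfold wallCfg; rw [smul_eV_apply]; simp

lemma wallCfg_apply_zero (w k : ℤ) :
    wallCfg i0 w k 0 = if 0 < k then 0 else if 0 = k then w else 1 := by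
  simp [wallCfg]

lemma wallCfg_inj {w w' k k' : ℤ} (hw : 2 ≤ w) (hw' : 2 ≤ w')
    (h : wallCfg i0 w k = wallCfg i0 w' k') : w = w' ∧ k = k' := by
  have h1 := congrFun h (k • eV i0)
  have h2 := congrFun h (k' • eV i0)
  rw [wallCfg_apply_smul, wallCfg_apply_smul] at h1 h2
  split_ifs at h1 h2 <;> omega

lemma cC_ne_wallCfg {a w k : ℤ} (hw : 2 ≤ w) (ha : a ≤ 1) : cC d a ≠ wallCfg i0 w k := by
  intro h
  have h1 := congrFun h (k • eV i0)
  rw [wallCfg_apply_smul] at h1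
  simp only [cC] at h1
  split_ifs at h1 <;> omega

lemma cC_inj {a b : ℤ} (h : cC d a = cC d b) : a = b := congrFun h 0

lemma cC_mem_XI (a : ℤ) (h01 : a = 0 ∨ a = 1) : cC d a ∈ XI d i0 n := by
  rw [XI, mem_XofF_pairF]
  refine ⟨fun v => ?_, fun v => ?_, fun v i hi => rfl⟩
  · rw [Finset.mem_Icc]; unfold cC; omega
  · unfold cC allowedI; omega

lemma wallCfg_mem_XI {w : ℤ} (hw2 : 2 ≤ w) (hwn : w ≤ (n:ℤ)+1) (k : ℤ) :
    wallCfg i0 w k ∈ XI d i0 n := by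
  rw [XI, mem_XofF_pairF]
  refine ⟨fun v => ?_, fun v => ?_, fun v i hi => ?_⟩
  · rw [Finset.mem_Icc]; unfold wallCfg; split_ifs <;> omega
  · have hv : (v + eV i0) i0 = v i0 + 1 := add_eV_apply_self v i0
    unfold wallCfg allowedI
    rw [hv]
    split_ifs <;> omega
  · unfold wallCfg
    rw [add_eV_apply_ne v (Ne.symm hi)]

lemma shift_cC (u : ZD d) (a : ℤ) : shiftMap u (cC d a) = cC d a := rfl

lemma shift_wallCfg (u : ZD d) (w k : ℤ) :
    shiftMap u (wallCfg i0 w k) = wallCfg i0 w (k - u i0) := by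
  funext v
  simp only [shiftMap, wallCfg, Pi.add_apply]
  split_ifs <;> omega

lemma classifyI {x : Config d} (hx : x ∈ XI d i0 n) :
    x = cC d 0 ∨ x = cC d 1 ∨ ∃ w k, 2 ≤ w ∧ w ≤ (n:ℤ)+1 ∧ x = wallCfg i0 w k := by
  rw [XI, mem_XofF_pairF] at hx
  obtain ⟨hA, hR, hinv⟩ := hx
  set g : ℤ → ℤ := fun t => x (t • eV i0) with hg
  have hrepr : ∀ v, x v = g (v i0) := fun v =>
    eq_of_agree_off hinv v _ (by rw [smul_eV_apply]; simp)
  have hgA : ∀ t, 0 ≤ g t ∧ g t ≤ (n:ℤ)+1 := by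
    intro t
    have := hA (t • eV i0)
    rw [Finset.mem_Icc] at this
    exact this
  have hsmul : ∀ t : ℤ, t • eV i0 + eV i0 = (t+1) • eV (d := d) i0 := by
    intro t; rw [add_smul, one_smul]
  have hstep : ∀ t, allowedI n (g t) (g (t+1)) := by
    intro t
    have h := hR (t • eV i0)
    rw [hsmul t] at h
    exact h
  by_cases hw : ∃ t, 2 ≤ g t
  · obtain ⟨t, ht⟩ := hw
    have hleft : ∀ s, s ≤ t - 1 → g s = 0 := by
      apply int_induct_down
      · have h := hstep (t-1)
        rw [sub_add_cancel] at h
        rcases h with ⟨h1,h2⟩|⟨h1,h2⟩|⟨h1,h2,h3⟩|⟨h1,h2,h3⟩ <;> omega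
      · intro s hs hs0
        have h := hstep (s-1)
        rw [sub_add_cancel] at h
        rcases h with ⟨h1,h2⟩|⟨h1,h2⟩|⟨h1,h2,h3⟩|⟨h1,h2,h3⟩ <;> omega
    have hright : ∀ s, t + 1 ≤ s → g s = 1 := by
      apply int_induct_up
      · have h := hstep t
        have hb := (hgA t).2
        rcases h with ⟨h1,h2⟩|⟨h1,h2⟩|⟨h1,h2,h3⟩|⟨h1,h2,h3⟩ <;> omega
      · intro s hs hs1
        have h := hstep s
        rcases h with ⟨h1,h2⟩|⟨h1,h2⟩|⟨h1,h2,h3⟩|⟨h1,h2,h3⟩ <;> omega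
    refine Or.inr (Or.inr ⟨g t, t, ht, (hgA t).2, ?_⟩)
    funext v
    rw [hrepr v]
    unfold wallCfg
    by_cases h1 : v i0 < t
    · rw [if_pos h1]; exact hleft _ (by omega)
    · rw [if_neg h1]
      by_cases h2 : v i0 = t
      · rw [if_pos h2, h2]
      · rw [if_neg h2]; exact hright _ (by omega)
  · push_neg at hw
    have hstep2 : ∀ t, g (t+1) = g t := by
      intro t
      have h := hstep t
      have b1 := hw t
      have b2 := hw (t+1)
      rcases h with ⟨h1,h2⟩|⟨h1,h2⟩|⟨h1,h2,h3⟩|⟨h1,h2,h3⟩ <;> omega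
    have hconst : ∀ t, g t = g 0 := by
      intro t
      rcases le_or_gt 0 t with h | h
      · exact int_induct_up (P := fun s => g s = g 0) rfl
          (fun s _ ih => by show g (s+1) = g 0; rw [hstep2 s]; exact ih) t h
      · refine int_induct_down (P := fun s => g s = g 0) rfl
          (fun s _ ih => ?_) t (by omega)
        have h5 := hstep2 (s-1)
        rw [sub_add_cancel] at h5
        show g (s-1) = g 0
        rw [← h5]; exact ih
    have hx0 : x = cC d (g 0) := by
      funext v; rw [hrepr v, hconst (v i0)]; rfl
    have : g 0 = 0 ∨ g 0 = 1 := by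
      have := hgA 0
      have := hw 0
      omega
    rcases this with h | h
    · exact Or.inl (by rw [hx0, h])
    · exact Or.inr (Or.inl (by rw [hx0, h]))

end Aux
namespace Aux
variable {d : ℕ} {i0 : Fin d} {n : ℕ}

def MIset (d : ℕ) (i0 : Fin d) (n : ℕ) (w : ℤ) : Set (Config d) :=
  {y | y = cC d 0 ∨ y = cC d 1 ∨ ∃ w' k, 2 ≤ w' ∧ w' ≤ (n:ℤ)+1 ∧ w' ≠ w ∧ y = wallCfg i0 w' k}

lemma MIset_subset (w : ℤ) : MIset d i0 n w ⊆ XI d i0 n := by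
  rintro y (rfl | rfl | ⟨w', k, h2, hn', hne, rfl⟩)
  · exact cC_mem_XI 0 (Or.inl rfl)
  · exact cC_mem_XI 1 (Or.inr rfl)
  · exact wallCfg_mem_XI h2 hn' k

lemma XI_isShift : IsShift (XI d i0 n) :=
  ⟨⟨cC d 0, cC_mem_XI 0 (Or.inl rfl)⟩, ⟨Finset.Icc 0 ((n:ℤ)+1), fun x hx v => hx.1 v⟩,
    XofF_closed _ _, fun u x hx => XofF_shift _ _ u hx⟩

lemma XI_sft : IsSFT (XI d i0 n) := ⟨_, _, rfl⟩

lemma wall_shift_mem {S : Set (Config d)} (hinv : ∀ u : ZD d, ∀ z ∈ S, shiftMap u z ∈ S)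
    {w k : ℤ} (h : wallCfg i0 w k ∈ S) : ∀ k', wallCfg i0 w k' ∈ S := by
  intro k'
  have h2 := hinv ((k - k') • eV i0) _ h
  rw [shift_wallCfg] at h2
  have h3 : k - ((k - k') • eV i0) i0 = k' := by rw [smul_eV_apply]; simp
  rw [h3] at h2
  exact h2

lemma cC0_mem_closure {w : ℤ} (hw2 : 2 ≤ w) {S : Set (Config d)}
    (hS : ∀ k, wallCfg i0 w k ∈ S) : cC d 0 ∈ deltaClosure S := by
  rw [mem_deltaClosure_iff]
  intro k0
  refine ⟨wallCfg i0 w ((k0:ℤ)+1), hS _, fun v hv => ?_⟩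
  have hb : (v i0).natAbs ≤ k0 := le_trans (natAbs_le_normInf v i0) hv
  unfold cC wallCfg
  rw [if_pos (by omega)]

lemma cC1_mem_closure {w : ℤ} (hw2 : 2 ≤ w) {S : Set (Config d)}
    (hS : ∀ k, wallCfg i0 w k ∈ S) : cC d 1 ∈ deltaClosure S := by
  rw [mem_deltaClosure_iff]
  intro k0
  refine ⟨wallCfg i0 w (-(k0:ℤ)-1), hS _, fun v hv => ?_⟩
  have hb : (v i0).natAbs ≤ k0 := le_trans (natAbs_le_normInf v i0) hv
  unfold cC wallCfg
  rw [if_neg (by omega), if_neg (by omega)]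

lemma MIset_subsystem {w : ℤ} (hw2 : 2 ≤ w) : IsSubsystem (MIset d i0 n w) (XI d i0 n) := by
  refine ⟨⟨cC d 0, Or.inl rfl⟩, MIset_subset w, ?_, ?_⟩
  · intro y hy
    have hyX : y ∈ XI d i0 n := XofF_closed _ _ (deltaClosure_mono (MIset_subset w) hy)
    rcases classifyI hyX with rfl | rfl | ⟨w', k, h2, hn', rfl⟩
    · exact Or.inl rfl
    · exact Or.inr (Or.inl rfl)
    · refine Or.inr (Or.inr ⟨w', k, h2, hn', ?_, rfl⟩)
      intro hww
      subst hww
      rw [mem_deltaClosure_iff] at hy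
      obtain ⟨a, ha, hagr⟩ := hy k.natAbs
      have hpos : normInf (k • eV i0) ≤ k.natAbs := by
        rw [normInf_le_iff]
        intro i
        rw [smul_eV_apply]
        split_ifs <;> simp
      have hval : a (k • eV i0) = w' := by
        rw [← hagr _ hpos, wallCfg_apply_smul]
        simp
      rcases ha with rfl | rfl | ⟨w'', k'', g2, gn, gne, rfl⟩
      · simp [cC] at hval; omega
      · simp [cC] at hval; omega
      · rw [wallCfg_apply_smul] at hval
        split_ifs at hval <;> omega
  · rintro u y (rfl | rfl | ⟨w', k, h2, hn', hne, rfl⟩)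
    · exact Or.inl rfl
    · exact Or.inr (Or.inl rfl)
    · exact Or.inr (Or.inr ⟨w', k - u i0, h2, hn', hne, shift_wallCfg u w' k⟩)

lemma wallCfg_not_mem_MIset {w : ℤ} (hw2 : 2 ≤ w) (k : ℤ) :
    wallCfg i0 w k ∉ MIset d i0 n w := by
  rintro (h | h | ⟨w', k', h2, hn', hne, h⟩)
  · exact cC_ne_wallCfg hw2 (by omega) h.symm
  · exact cC_ne_wallCfg hw2 (by omega) h.symm
  · exact hne ((wallCfg_inj hw2 h2 h).1.symm)

lemma MIset_maximal {w : ℤ} (hw2 : 2 ≤ w) (hwn : w ≤ (n:ℤ)+1) :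
    IsMaximalSubsystem (MIset d i0 n w) (XI d i0 n) := by
  refine ⟨MIset_subsystem hw2, ?_, ?_⟩
  · intro h
    have hmem : wallCfg i0 w 0 ∈ MIset d i0 n w := h ▸ wallCfg_mem_XI hw2 hwn 0
    exact wallCfg_not_mem_MIset hw2 0 hmem
  · intro Z' hZ' hss
    obtain ⟨y, hyZ, hyM⟩ := Set.exists_of_ssubset hss
    have hyX : y ∈ XI d i0 n := hZ'.2.1 hyZ
    rcases classifyI hyX with rfl | rfl | ⟨w', k, h2, hn', rfl⟩
    · exact absurd (Or.inl rfl) hyM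
    · exact absurd (Or.inr (Or.inl rfl)) hyM
    · have hww : w' = w := by
        by_contra hne
        exact hyM (Or.inr (Or.inr ⟨w', k, h2, hn', hne, rfl⟩))
      subst hww
      have horb : ∀ k', wallCfg i0 w' k' ∈ Z' := wall_shift_mem hZ'.2.2.2 hyZ
      apply Set.eq_of_subset_of_subset hZ'.2.1
      intro x hx
      rcases classifyI hx with rfl | rfl | ⟨w'', k'', g2, gn, rfl⟩
      · exact hZ'.2.2.1 (cC0_mem_closure h2 horb)
      · exact hZ'.2.2.1 (cC1_mem_closure h2 horb)
      · by_cases hws : w'' = w'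
        · subst hws; exact horb k''
        · exact hss.1 (Or.inr (Or.inr ⟨w'', k'', g2, gn, hws, rfl⟩))

lemma maximal_classification (hn : 1 ≤ n) {Z : Set (Config d)}
    (hZ : IsMaximalSubsystem Z (XI d i0 n)) :
    ∃ w, 2 ≤ w ∧ w ≤ (n:ℤ)+1 ∧ Z = MIset d i0 n w := by
  obtain ⟨⟨hne, hsub, hcl, hinv⟩, hproper, hmax⟩ := hZ
  by_cases hall : ∀ w : ℤ, 2 ≤ w → w ≤ (n:ℤ)+1 → ∃ k, wallCfg i0 w k ∈ Z
  · exfalso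
    apply hproper
    apply Set.eq_of_subset_of_subset hsub
    intro x hx
    have h2 : ∀ k, wallCfg i0 2 k ∈ Z := by
      obtain ⟨k, hk⟩ := hall 2 le_rfl (by omega)
      exact wall_shift_mem hinv hk
    rcases classifyI hx with rfl | rfl | ⟨w', k', g2, gn, rfl⟩
    · exact hcl (cC0_mem_closure le_rfl h2)
    · exact hcl (cC1_mem_closure le_rfl h2)
    · obtain ⟨k, hk⟩ := hall w' g2 gn
      exact wall_shift_mem hinv hk k'
  · push_neg at hall
    obtain ⟨w, hw2, hwn, hnok⟩ := hall
    have hsubM : Z ⊆ MIset d i0 n w := by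
      intro z hz
      rcases classifyI (hsub hz) with rfl | rfl | ⟨w', k, g2, gn, rfl⟩
      · exact Or.inl rfl
      · exact Or.inr (Or.inl rfl)
      · refine Or.inr (Or.inr ⟨w', k, g2, gn, ?_, rfl⟩)
        intro h; subst h; exact hnok k hz
    refine ⟨w, hw2, hwn, ?_⟩
    rcases eq_or_ne Z (MIset d i0 n w) with h | h
    · exact h
    · exfalso
      have hXx := hmax (MIset d i0 n w) (MIset_subsystem hw2) (ssubset_of_subset_of_ne hsubM h)
      exact wallCfg_not_mem_MIset hw2 0 (hXx ▸ wallCfg_mem_XI hw2 hwn 0)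

lemma maximal_set_eq (hn : 1 ≤ n) :
    {Z : Set (Config d) | IsMaximalSubsystem Z (XI d i0 n)} =
      (fun w => MIset d i0 n w) '' (Set.Icc 2 ((n:ℤ)+1)) := by
  ext Z
  constructor
  · intro hZ
    obtain ⟨w, h2, hn', hEq⟩ := maximal_classification hn hZ
    exact ⟨w, Set.mem_Icc.mpr ⟨h2, hn'⟩, hEq.symm⟩
  · rintro ⟨w, hw, rfl⟩
    rw [Set.mem_Icc] at hw
    exact MIset_maximal hw.1 hw.2

lemma MIset_injOn : Set.InjOn (fun w => MIset d i0 n w) (Set.Icc 2 ((n:ℤ)+1)) := by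
  intro a ha b hb hab
  rw [Set.mem_Icc] at ha hb
  by_contra hne
  have hab' : MIset d i0 n a = MIset d i0 n b := hab
  have hmem : wallCfg i0 b 0 ∈ MIset d i0 n a :=
    Or.inr (Or.inr ⟨b, 0, hb.1, hb.2, Ne.symm hne, rfl⟩)
  rw [hab'] at hmem
  exact wallCfg_not_mem_MIset hb.1 0 hmem

lemma part_finite (hn : 1 ≤ n) :
    {Z : Set (Config d) | IsMaximalSubsystem Z (XI d i0 n)}.Finite ∧
    {Z : Set (Config d) | IsMaximalSubsystem Z (XI d i0 n)}.ncard = n := by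
  rw [maximal_set_eq hn]
  constructor
  · exact (Set.finite_Icc _ _).image _
  · rw [Set.ncard_image_of_injOn MIset_injOn, ← Finset.coe_Icc, Set.ncard_coe_finset,
      Int.card_Icc]
    omega

-- n = 0 construction
lemma X0_eq : XofF (d := d) {0} (↑(∅ : Finset (Finset (ZD d) × (ZD d → ℤ)))) = {cC d 0} := by
  ext x
  constructor
  · intro hx
    have hv := hx.1
    have : x = cC d 0 := funext fun v => Finset.mem_singleton.mp (hv v)
    exact this
  · rintro rfl
    exact ⟨fun v => Finset.mem_singleton_self 0, fun q hq => absurd hq (by simp)⟩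

lemma X0_shift : IsShift (XofF (d := d) {0} (↑(∅ : Finset (Finset (ZD d) × (ZD d → ℤ))))) := by
  refine ⟨⟨cC d 0, ?_⟩, ⟨{0}, fun x hx v => hx.1 v⟩, XofF_closed _ _, fun u x hx => XofF_shift _ _ u hx⟩
  rw [X0_eq]; rfl

lemma X0_no_maximal :
    {Z : Set (Config d) | IsMaximalSubsystem Z
      (XofF {0} (↑(∅ : Finset (Finset (ZD d) × (ZD d → ℤ)))))} = ∅ := by
  rw [Set.eq_empty_iff_forall_notMem]
  intro Z hZ
  obtain ⟨⟨⟨z, hz⟩, hsub, _, _⟩, hproper, _⟩ := hZ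
  apply hproper
  apply Set.eq_of_subset_of_subset hsub
  intro x hx
  rw [X0_eq] at hx
  have hz' := hsub hz
  rw [X0_eq] at hz'
  rw [Set.mem_singleton_iff] at hx hz'
  rw [hx, ← hz']
  exact hz

end Aux
namespace Aux
variable {d : ℕ} {i0 : Fin d}

def allowedII (a b : ℤ) : Prop :=
  (a = 0 ∧ b = 0) ∨ (a = 0 ∧ b = 2) ∨ (a = 2 ∧ b = 4) ∨ (a = 4 ∧ b = 4) ∨
    (a = 4 ∧ b = 3) ∨ (a = 3 ∧ b = 1) ∨ (a = 1 ∧ b = 1)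

noncomputable def XII (d : ℕ) (i0 : Fin d) : Set (Config d) :=
  XofF (Finset.Icc 0 4) (↑(pairF i0 (Finset.Icc 0 4) allowedII))

def xW (i0 : Fin d) (m : ℕ) : Config d := fun v =>
  if v i0 < 0 then 0 else if v i0 = 0 then 2 else if v i0 ≤ (m:ℤ) then 4
  else if v i0 = (m:ℤ)+1 then 3 else 1

noncomputable def UII (i0 : Fin d) (m : ℕ) : Finset (ZD d) :=
  (Finset.Icc (-1 : ℤ) ((m:ℤ)+2)).image (fun t => t • eV i0)

lemma xW_apply_smul (m : ℕ) (t : ℤ) :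
    xW i0 m (t • eV i0) = if t < 0 then 0 else if t = 0 then 2 else if t ≤ (m:ℤ) then 4
      else if t = (m:ℤ)+1 then 3 else 1 := by
  unfold xW; rw [smul_eV_apply]; simp

lemma xW_apply_zero (m : ℕ) : xW (d := d) i0 m 0 = 2 := by
  unfold xW; simp

lemma xW_mem (m : ℕ) (hm : 1 ≤ m) : xW i0 m ∈ XII d i0 := by
  rw [XII, mem_XofF_pairF]
  refine ⟨fun v => ?_, fun v => ?_, fun v i hi => ?_⟩
  · rw [Finset.mem_Icc]; unfold xW; split_ifs <;> omega
  · unfold xW allowedII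
    rw [add_eV_apply_self]
    split_ifs <;> omega
  · unfold xW; rw [add_eV_apply_ne v (Ne.symm hi)]

lemma cC0_mem_XII : cC d 0 ∈ XII d i0 := by
  rw [XII, mem_XofF_pairF]
  exact ⟨fun v => by rw [Finset.mem_Icc]; unfold cC; omega,
    fun v => Or.inl ⟨rfl, rfl⟩, fun v i hi => rfl⟩

lemma XII_isShift : IsShift (XII d i0) :=
  ⟨⟨cC d 0, cC0_mem_XII⟩, ⟨Finset.Icc 0 4, fun x hx v => hx.1 v⟩,
    XofF_closed _ _, fun u x hx => XofF_shift _ _ u hx⟩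

lemma zero_mem_UII (m : ℕ) : (0 : ZD d) ∈ UII i0 m :=
  Finset.mem_image.mpr ⟨0, Finset.mem_Icc.mpr (by constructor <;> omega), zero_smul _ _⟩

lemma smul_mem_UII {m : ℕ} {t : ℤ} (h1 : -1 ≤ t) (h2 : t ≤ (m:ℤ)+2) :
    t • eV i0 ∈ UII i0 m :=
  Finset.mem_image.mpr ⟨t, Finset.mem_Icc.mpr ⟨h1, h2⟩, rfl⟩

lemma xW_appears_self (m : ℕ) : PatternAppears (UII i0 m) (xW i0 m) (xW i0 m) :=
  ⟨0, fun v _ => by rw [zero_add]⟩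

lemma rigidII {m : ℕ} (hm : 1 ≤ m) {y : Config d} (hy : y ∈ XII d i0)
    (hp : PatternAppears (UII i0 m) (xW i0 m) y) : ∃ u, y = shiftMap u (xW i0 m) := by
  obtain ⟨u, hu⟩ := hp
  have hzX : shiftMap u y ∈ XII d i0 := XofF_shift _ _ u hy
  set z := shiftMap u y with hzdef
  rw [XII, mem_XofF_pairF] at hzX
  obtain ⟨hA, hR, hinv⟩ := hzX
  set g : ℤ → ℤ := fun t => z (t • eV i0) with hg
  have hrepr : ∀ v, z v = g (v i0) := fun v =>
    eq_of_agree_off hinv v _ (by rw [smul_eV_apply]; simp)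
  have hagree : ∀ t : ℤ, -1 ≤ t → t ≤ (m:ℤ)+2 → g t = xW i0 m (t • eV i0) :=
    fun t h1 h2 => hu (t • eV i0) (smul_mem_UII h1 h2)
  have hsmul : ∀ t : ℤ, t • eV i0 + eV i0 = (t+1) • eV (d := d) i0 := by
    intro t; rw [add_smul, one_smul]
  have hstep : ∀ t, allowedII (g t) (g (t+1)) := by
    intro t
    have h := hR (t • eV i0)
    rw [hsmul t] at h
    exact h
  have hm1 : g (-1) = 0 := by
    rw [hagree (-1) (by omega) (by omega), xW_apply_smul]
    norm_num
  have hleft : ∀ t, t ≤ -1 → g t = 0 := by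
    refine int_induct_down (P := fun t => g t = 0) hm1 ?_
    intro s hs hs0
    show g (s-1) = 0
    have hs0' : g s = 0 := hs0
    have h := hstep (s-1)
    rw [sub_add_cancel] at h
    rcases h with ⟨h1,h2⟩|⟨h1,h2⟩|⟨h1,h2⟩|⟨h1,h2⟩|⟨h1,h2⟩|⟨h1,h2⟩|⟨h1,h2⟩ <;> omega
  have hm2 : g ((m:ℤ)+2) = 1 := by
    rw [hagree ((m:ℤ)+2) (by omega) (by omega), xW_apply_smul]
    split_ifs <;> omega
  have hright : ∀ t, (m:ℤ)+2 ≤ t → g t = 1 := by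
    refine int_induct_up (P := fun t => g t = 1) hm2 ?_
    intro s hs hs1
    show g (s+1) = 1
    have hs1' : g s = 1 := hs1
    have h := hstep s
    rcases h with ⟨h1,h2⟩|⟨h1,h2⟩|⟨h1,h2⟩|⟨h1,h2⟩|⟨h1,h2⟩|⟨h1,h2⟩|⟨h1,h2⟩ <;> omega
  have hze : z = xW i0 m := by
    funext v
    rw [hrepr v]
    rcases lt_or_ge (v i0) (-1) with h | h
    · rw [hleft _ (by omega)]
      unfold xW
      rw [if_pos (by omega)]
    · rcases le_or_gt (v i0) ((m:ℤ)+2) with h2 | h2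
      · rw [hagree _ (by omega) h2, xW_apply_smul]
        unfold xW
        rfl
      · rw [hright _ (by omega)]
        unfold xW
        rw [if_neg (by omega), if_neg (by omega), if_neg (by omega), if_neg (by omega)]
  exact ⟨-u, by rw [← hze, hzdef, shiftMap_neg_shift]⟩

noncomputable def ZW (d : ℕ) (i0 : Fin d) (m : ℕ) : Set (Config d) :=
  {y | y ∈ XII d i0 ∧ ¬ PatternAppears (UII i0 m) (xW i0 m) y}

lemma cC0_mem_ZW (m : ℕ) : cC d 0 ∈ ZW d i0 m := by
  refine ⟨cC0_mem_XII, ?_⟩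
  rintro ⟨u, hu⟩
  have h0 := hu 0 (zero_mem_UII m)
  rw [add_zero, xW_apply_zero] at h0
  exact absurd h0 (by unfold cC; omega)

lemma ZW_subsystem (m : ℕ) : IsSubsystem (ZW d i0 m) (XII d i0) :=
  ⟨⟨cC d 0, cC0_mem_ZW m⟩, fun y hy => hy.1, avoid_closed _ (XofF_closed _ _) _ _,
    fun u y hy => ⟨XofF_shift _ _ u hy.1, fun h => hy.2 (patternAppears_shift h)⟩⟩

lemma ZW_maximal (m : ℕ) (hm : 1 ≤ m) : IsMaximalSubsystem (ZW d i0 m) (XII d i0) := by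
  refine ⟨ZW_subsystem m, ?_, ?_⟩
  · intro h
    have hmem : xW i0 m ∈ ZW d i0 m := h ▸ xW_mem m hm
    exact hmem.2 (xW_appears_self m)
  · intro Z' hZ' hss
    obtain ⟨y, hyZ, hyM⟩ := Set.exists_of_ssubset hss
    have hyX := hZ'.2.1 hyZ
    have happ : PatternAppears (UII i0 m) (xW i0 m) y := by
      by_contra happ
      exact hyM ⟨hyX, happ⟩
    obtain ⟨u, rfl⟩ := rigidII hm hyX happ
    have hxWZ : xW i0 m ∈ Z' := by
      have h2 := hZ'.2.2.2 (-u) _ hyZ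
      rwa [shiftMap_neg_shift] at h2
    apply Set.eq_of_subset_of_subset hZ'.2.1
    intro x hx
    by_cases happ2 : PatternAppears (UII i0 m) (xW i0 m) x
    · obtain ⟨u', rfl⟩ := rigidII hm hx happ2
      exact hZ'.2.2.2 u' _ hxWZ
    · exact hss.1 ⟨hx, happ2⟩

lemma xW_avoids {m m' : ℕ} (hne : m ≠ m') :
    ¬ PatternAppears (UII i0 m) (xW i0 m) (xW i0 m') := by
  rintro ⟨u, hu⟩
  have h0 := hu 0 (zero_mem_UII m)
  rw [add_zero, xW_apply_zero] at h0
  have hu0 : u i0 = 0 := by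
    unfold xW at h0
    split_ifs at h0 <;> omega
  have h1 := hu (((m:ℤ)+1) • eV i0) (smul_mem_UII (by omega) (by omega))
  have hr : xW i0 m (((m:ℤ)+1) • eV i0) = 3 := by
    rw [xW_apply_smul]
    split_ifs <;> omega
  rw [hr] at h1
  have hcoord : (u + ((m:ℤ)+1) • eV i0) i0 = (m:ℤ)+1 := by
    rw [Pi.add_apply, smul_eV_apply]
    simp [hu0]
  unfold xW at h1
  rw [hcoord] at h1
  split_ifs at h1 <;> omega

lemma ZW_ne {m m' : ℕ} (hm : 1 ≤ m) (hm' : 1 ≤ m') (hne : m ≠ m') :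
    ZW d i0 m ≠ ZW d i0 m' := by
  intro h
  have h1 : xW i0 m' ∈ ZW d i0 m := ⟨xW_mem m' hm', xW_avoids hne⟩
  rw [h] at h1
  exact h1.2 (xW_appears_self m')

lemma ZW_infinite : {Z : Set (Config d) | IsMaximalSubsystem Z (XII d i0)}.Infinite := by
  apply Set.infinite_of_injective_forall_mem (f := fun m : ℕ => ZW d i0 (m+1))
  · intro a b hab
    by_contra hne
    exact ZW_ne (by omega) (by omega) (by omega) hab
  · intro m
    exact ZW_maximal (m+1) (by omega)

end Aux

namespace Aux
variable {d : ℕ}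

lemma maximal_countable {X : Set (Config d)} (hX : IsShift X) :
    {Z : Set (Config d) | IsMaximalSubsystem Z X}.Countable := by
  obtain ⟨hne, hAlph, hcl, hinv⟩ := hX
  have hsub : {Z : Set (Config d) | IsMaximalSubsystem Z X} ⊆
      Set.range (fun q : Finset (ZD d) × (ZD d →₀ ℤ) =>
        {y | y ∈ X ∧ ¬ PatternAppears q.1 (q.2 : ZD d → ℤ) y}) := by
    intro Z hZ
    obtain ⟨⟨hZne, hZsub, hZcl, hZinv⟩, hproper, hmax⟩ := hZ
    obtain ⟨x, hxX, hxZ⟩ := Set.exists_of_ssubset (ssubset_of_subset_of_ne hZsub hproper)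
    have hxcl : x ∉ deltaClosure Z := fun hc => hxZ (hZcl hc)
    rw [mem_deltaClosure_iff] at hxcl
    push_neg at hxcl
    obtain ⟨k, hk⟩ := hxcl
    set U : Finset (ZD d) := Fintype.piFinset (fun _ : Fin d => Finset.Icc (-(k:ℤ)) k) with hU
    have hUmem : ∀ v : ZD d, v ∈ U ↔ normInf v ≤ k := by
      intro v
      rw [hU, Fintype.mem_piFinset, normInf_le_iff]
      apply forall_congr'
      intro i
      rw [Finset.mem_Icc]
      omega
    classical
    set f : ZD d →₀ ℤ := Finsupp.onFinset U (fun v => if v ∈ U then x v else 0)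
      (fun v hv => by
        by_contra h
        have hv' : (if v ∈ U then x v else 0) ≠ 0 := hv
        rw [if_neg h] at hv'
        exact hv' rfl) with hf
    have hfB : ∀ v ∈ U, (f : ZD d → ℤ) v = x v := by
      intro v hv
      rw [hf, Finsupp.onFinset_apply, if_pos hv]
    have hnotZ : ∀ z ∈ Z, ¬ PatternAppears U (f : ZD d → ℤ) z := by
      rintro z hz ⟨u, hu⟩
      obtain ⟨v, hv, hvne⟩ := hk (shiftMap u z) (hZinv u z hz)
      apply hvne
      rw [shiftMap_apply]
      have hvU : v ∈ U := (hUmem v).mpr hv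
      exact ((hu v hvU).trans (hfB v hvU)).symm
    have hsub2 : Z ⊆ {y | y ∈ X ∧ ¬ PatternAppears U (f : ZD d → ℤ) y} :=
      fun z hz => ⟨hZsub hz, hnotZ z hz⟩
    have hxapp : PatternAppears U (f : ZD d → ℤ) x :=
      ⟨0, fun v hv => by rw [zero_add, hfB v hv]⟩
    have hGsub : IsSubsystem {y | y ∈ X ∧ ¬ PatternAppears U (f : ZD d → ℤ) y} X :=
      ⟨hZne.mono hsub2, fun y hy => hy.1, avoid_closed X hcl U _,
        fun u y hy => ⟨hinv u y hy.1, fun h => hy.2 (patternAppears_shift h)⟩⟩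
    have hGne : {y | y ∈ X ∧ ¬ PatternAppears U (f : ZD d → ℤ) y} ≠ X := by
      intro h
      have hxmem : x ∈ {y | y ∈ X ∧ ¬ PatternAppears U (f : ZD d → ℤ) y} := by
        rw [h]; exact hxX
      exact hxmem.2 hxapp
    refine ⟨(U, f), ?_⟩
    show {y | y ∈ X ∧ ¬ PatternAppears U (f : ZD d → ℤ) y} = Z
    rcases eq_or_ne Z {y | y ∈ X ∧ ¬ PatternAppears U (f : ZD d → ℤ) y} with h | h
    · exact h.symm
    · exact absurd (hmax _ hGsub (ssubset_of_subset_of_ne hsub2 h)) hGne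
  exact Set.Countable.mono hsub (Set.countable_range _)

end Aux


/-- For every `d > 1` and every `n ∈ ℕ`, there is a `d`-dimensional shift
of finite type with exactly `n` maximal subsystems; moreover there is one with
infinitely (countably) many maximal subsystems. -/
theorem realization_of_all_maximality_types
    (d : ℕ) (hd : 1 < d) :
    (∀ n : ℕ, ∃ X : Set (Config d), IsShift X ∧ IsSFT X ∧
      {Z : Set (Config d) | IsMaximalSubsystem Z X}.Finite ∧
      {Z : Set (Config d) | IsMaximalSubsystem Z X}.ncard = n) ∧
    (∃ X : Set (Config d), IsShift X ∧ IsSFT X ∧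
      {Z : Set (Config d) | IsMaximalSubsystem Z X}.Infinite ∧
      {Z : Set (Config d) | IsMaximalSubsystem Z X}.Countable) := by
  have hd0 : 0 < d := by omega
  set i0 : Fin d := ⟨0, hd0⟩
  constructor
  · intro n
    rcases Nat.eq_zero_or_pos n with rfl | hn
    · refine ⟨XofF {0} (↑(∅ : Finset (Finset (ZD d) × (ZD d → ℤ)))), Aux.X0_shift,
        ⟨{0}, ∅, rfl⟩, ?_, ?_⟩
      · rw [Aux.X0_no_maximal]; exact Set.finite_empty
      · rw [Aux.X0_no_maximal]; exact Set.ncard_empty _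
    · obtain ⟨hfin, hcard⟩ := Aux.part_finite (i0 := i0) (n := n) hn
      exact ⟨Aux.XI d i0 n, Aux.XI_isShift, Aux.XI_sft, hfin, hcard⟩
  · exact ⟨Aux.XII d i0, Aux.XII_isShift, ⟨_, _, rfl⟩, Aux.ZW_infinite,
      Aux.maximal_countable Aux.XII_isShift⟩
end

section
/- Let A ⊂ ℤ be a finite alphabet and F any set of patterns on A such that X := X_F is nonempty. If Z is a maximal subsystem of X, then there exists a pattern p ∉ F such that Z = X_{F ∪ {p}}. In particular, every maximal subsystem of a shift of finite type is of finite type, and the set of maximal subsystems of any shift is countable. -/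
section Aux

variable {d : ℕ}

lemma normInf_le_iff (v : ZD d) (k : ℕ) : normInf v ≤ k ↔ ∀ i, (v i).natAbs ≤ k := by
  simp [normInf, Finset.sup_le_iff]

/-- The ball of radius `k` in `ℤ^d`, as a finset. -/
noncomputable def ballF (d k : ℕ) : Finset (ZD d) := Finset.Icc (fun _ => -(k : ℤ)) (fun _ => (k : ℤ))

lemma mem_ballF {k : ℕ} {v : ZD d} : v ∈ ballF d k ↔ normInf v ≤ k := by
  simp only [ballF, Finset.mem_Icc, Pi.le_def, normInf_le_iff]
  constructor
  · rintro ⟨h1, h2⟩ i; have := h1 i; have := h2 i; omega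
  · intro h
    exact ⟨fun i => by have := h i; omega, fun i => by have := h i; omega⟩

lemma agree_of_delta_lt {x y : Config d} {k : ℕ}
    (h : deltaDist x y < (2 : ℝ) ^ (-(k : ℤ))) :
    ∀ n : ZD d, normInf n ≤ k → x n = y n := by
  intro n hn
  by_contra hne
  have hxy : x ≠ y := fun he => hne (by rw [he])
  rw [deltaDist, if_neg hxy] at h
  have hle : sInf {m : ℕ | ∃ n : ZD d, normInf n = m ∧ x n ≠ y n} ≤ normInf n :=
    Nat.sInf_le ⟨n, rfl, hne⟩
  have h2 : (2 : ℝ) ^ (-(k : ℤ)) ≤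
      (2 : ℝ) ^ (-((sInf {m : ℕ | ∃ n : ZD d, normInf n = m ∧ x n ≠ y n} : ℕ) : ℤ)) := by
    apply zpow_le_zpow_right₀ (by norm_num)
    omega
  linarith

lemma delta_le_of_agree {x y : Config d} {k : ℕ}
    (h : ∀ n : ZD d, normInf n ≤ k → x n = y n) :
    deltaDist x y ≤ (2 : ℝ) ^ (-((k : ℤ) + 1)) := by
  rw [deltaDist]
  split_ifs with he
  · positivity
  · have hS : {m : ℕ | ∃ n : ZD d, normInf n = m ∧ x n ≠ y n}.Nonempty := by
      obtain ⟨n, hn⟩ := Function.ne_iff.mp he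
      exact ⟨normInf n, n, rfl, hn⟩
    obtain ⟨n, hn, hne⟩ := Nat.sInf_mem hS
    have hgt : k + 1 ≤ sInf {m : ℕ | ∃ n : ZD d, normInf n = m ∧ x n ≠ y n} := by
      by_contra hc
      push_neg at hc
      have : normInf n ≤ k := by omega
      exact hne (h n this)
    apply zpow_le_zpow_right₀ (by norm_num)
    omega

lemma mem_deltaClosure_of_agree {S : Set (Config d)} {x : Config d}
    (h : ∀ k : ℕ, ∃ z ∈ S, ∀ v : ZD d, normInf v ≤ k → x v = z v) :
    x ∈ deltaClosure S := by
  intro ε hε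
  obtain ⟨k, hk⟩ := exists_pow_lt_of_lt_one hε (by norm_num : (1 / 2 : ℝ) < 1)
  obtain ⟨z, hz, hag⟩ := h k
  refine ⟨z, hz, lt_of_le_of_lt (delta_le_of_agree hag) (lt_of_le_of_lt ?_ hk)⟩
  have : ((1 : ℝ) / 2) ^ k = (2 : ℝ) ^ (-(k : ℤ)) := by
    rw [one_div, inv_pow, ← zpow_natCast, ← zpow_neg]
  rw [this]
  apply zpow_le_zpow_right₀ (by norm_num)
  omega

lemma xofF_closed {A : Finset ℤ} {F : Set (Finset (ZD d) × (ZD d → ℤ))} :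
    IsDeltaClosed (XofF A F) := by
  intro x hx
  constructor
  · intro v
    obtain ⟨a, ha, hd'⟩ := hx ((2 : ℝ) ^ (-(normInf v : ℤ))) (by positivity)
    rw [agree_of_delta_lt hd' v le_rfl]
    exact ha.1 v
  · rintro ⟨U, p⟩ hq ⟨u, hu⟩
    set k := U.sup (fun v => normInf (u + v)) with hk
    obtain ⟨a, ha, hd'⟩ := hx ((2 : ℝ) ^ (-(k : ℤ))) (by positivity)
    refine ha.2 (U, p) hq ⟨u, fun v hv => ?_⟩
    rw [← agree_of_delta_lt hd' (u + v) (Finset.le_sup (f := fun v => normInf (u + v)) hv)]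
    exact hu v hv

lemma xofF_inv {A : Finset ℤ} {F : Set (Finset (ZD d) × (ZD d → ℤ))} :
    ∀ u : ZD d, ∀ x ∈ XofF A F, shiftMap u x ∈ XofF A F := by
  intro u x hx
  refine ⟨fun v => hx.1 (u + v), ?_⟩
  rintro q hq ⟨w, hw⟩
  refine hx.2 q hq ⟨u + w, fun v hv => ?_⟩
  rw [add_assoc]
  exact hw v hv

lemma exists_forbidden_pattern {Z : Set (Config d)} (hcl : IsDeltaClosed Z)
    (hinv : ∀ u : ZD d, ∀ z ∈ Z, shiftMap u z ∈ Z) {x : Config d} (hx : x ∉ Z) :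
    ∃ k : ℕ, ∀ z ∈ Z, ¬ PatternAppears (ballF d k) x z := by
  by_contra h
  push_neg at h
  apply hx
  apply hcl
  apply mem_deltaClosure_of_agree
  intro k
  obtain ⟨z, hz, u, hu⟩ := h k
  exact ⟨shiftMap u z, hinv u z hz, fun v hv => (hu v (mem_ballF.mpr hv)).symm⟩

lemma maximal_part1 (A : Finset ℤ) (F : Set (Finset (ZD d) × (ZD d → ℤ)))
    (Z : Set (Config d)) (hZ : IsMaximalSubsystem Z (XofF A F)) :
    ∃ p : Finset (ZD d) × (ZD d → ℤ), p ∉ F ∧ Z = XofF A (insert p F) := by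
  obtain ⟨⟨hZne, hZsub, hZcl, hZinv⟩, hZne', hmax⟩ := hZ
  have hex : ∃ x ∈ XofF A F, x ∉ Z := by
    by_contra h
    push_neg at h
    exact hZne' (Set.Subset.antisymm hZsub h)
  obtain ⟨x, hxX, hxZ⟩ := hex
  obtain ⟨k, hk⟩ := exists_forbidden_pattern hZcl hZinv hxZ
  refine ⟨(ballF d k, x), ?_, ?_⟩
  · intro hmem
    exact hxX.2 _ hmem ⟨0, fun v _ => by rw [zero_add]⟩
  · set p : Finset (ZD d) × (ZD d → ℤ) := (ballF d k, x) with hp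
    have hZ'sub : XofF A (insert p F) ⊆ XofF A F :=
      fun y hy => ⟨hy.1, fun q hq => hy.2 q (Set.mem_insert_of_mem _ hq)⟩
    have hZsub' : Z ⊆ XofF A (insert p F) := by
      intro z hz
      refine ⟨(hZsub hz).1, ?_⟩
      rintro q (rfl | hq)
      · exact hk z hz
      · exact (hZsub hz).2 q hq
    have hne : XofF A (insert p F) ≠ XofF A F := by
      intro he
      have hxX' : x ∈ XofF A (insert p F) := he ▸ hxX
      exact hxX'.2 p (Set.mem_insert _ _) ⟨0, fun v _ => by rw [zero_add]⟩
    by_contra hne2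
    have hss : Z ⊂ XofF A (insert p F) :=
      ⟨hZsub', fun h => hne2 (Set.Subset.antisymm hZsub' h)⟩
    exact hne (hmax _ ⟨hZne.mono hZsub', hZ'sub, xofF_closed, xofF_inv⟩ hss)

lemma shift_eq_xofF {X : Set (Config d)} (hX : IsShift X) (A : Finset ℤ)
    (hA : ∀ x ∈ X, ∀ v : ZD d, x v ∈ A) :
    X = XofF A {q : Finset (ZD d) × (ZD d → ℤ) | ∀ x ∈ X, ¬ PatternAppears q.1 q.2 x} := by
  apply Set.Subset.antisymm
  · intro x hx
    exact ⟨hA x hx, fun q hq => hq x hx⟩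
  · intro x hx
    apply hX.2.2.1
    apply mem_deltaClosure_of_agree
    intro k
    have hni : ¬ (∀ y ∈ X, ¬ PatternAppears (ballF d k) x y) := by
      intro h
      exact hx.2 (ballF d k, x) h ⟨0, fun v _ => by rw [zero_add]⟩
    push_neg at hni
    obtain ⟨y, hy, u, hu⟩ := hni
    exact ⟨shiftMap u y, hX.2.2.2 u y hy, fun v hv => (hu v (mem_ballF.mpr hv)).symm⟩

lemma maximal_part3 (X : Set (Config d)) (hX : IsShift X) :
    {Z : Set (Config d) | IsMaximalSubsystem Z X}.Countable := by
  obtain ⟨A, hA⟩ := hX.2.1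
  set F : Set (Finset (ZD d) × (ZD d → ℤ)) :=
    {q | ∀ x ∈ X, ¬ PatternAppears q.1 q.2 x} with hF
  have hXF : X = XofF A F := shift_eq_xofF hX A hA
  set φ : Finset (ZD d) × Finset (ZD d × ℤ) → Set (Config d) :=
    fun UG => XofF A F ∩ {x | ¬ ∃ u : ZD d, ∀ e ∈ UG.2, x (u + e.1) = e.2} with hφ
  apply Set.Countable.mono _ (Set.countable_range φ)
  rintro Z hZ
  obtain ⟨p, hpF, hpZ⟩ := maximal_part1 A F Z (hXF ▸ hZ)
  refine ⟨(p.1, p.1.image fun v => (v, p.2 v)), ?_⟩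
  rw [hpZ]
  ext x
  simp only [hφ, Set.mem_inter_iff, Set.mem_setOf_eq, XofF]
  constructor
  · rintro ⟨⟨h1, h2⟩, h3⟩
    refine ⟨h1, ?_⟩
    rintro q (rfl | hq)
    · rintro ⟨u, hu⟩
      refine h3 ⟨u, ?_⟩
      rintro e he
      simp only [Finset.mem_image] at he
      obtain ⟨v, hv, rfl⟩ := he
      exact hu v hv
    · exact h2 q hq
  · rintro ⟨h1, h2⟩
    refine ⟨⟨h1, fun q hq => h2 q (Set.mem_insert_of_mem _ hq)⟩, ?_⟩
    rintro ⟨u, hu⟩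
    exact h2 p (Set.mem_insert _ _)
      ⟨u, fun v hv => hu (v, p.2 v) (Finset.mem_image_of_mem _ hv)⟩

end Aux

/-- If `X = X_F` is nonempty and `Z` is a maximal subsystem of `X`, then
`Z = X_{F ∪ {p}}` for some pattern `p ∉ F`. In particular, every maximal subsystem of a
shift of finite type is of finite type, and every shift has countably many maximal
subsystems. -/
theorem maximal_subsystem_is_obtained_by_forbidding_one_pattern
    (d : ℕ) (hd : 1 ≤ d) :
    (∀ (A : Finset ℤ) (F : Set (Finset (ZD d) × (ZD d → ℤ))),
      (XofF A F).Nonempty →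
        ∀ Z : Set (Config d), IsMaximalSubsystem Z (XofF A F) →
          ∃ p : Finset (ZD d) × (ZD d → ℤ), p ∉ F ∧ Z = XofF A (insert p F)) ∧
    (∀ X : Set (Config d), IsShift X → IsSFT X →
      ∀ Z : Set (Config d), IsMaximalSubsystem Z X → IsSFT Z) ∧
    (∀ X : Set (Config d), IsShift X →
      {Z : Set (Config d) | IsMaximalSubsystem Z X}.Countable) := by
  refine ⟨?_, ?_, ?_⟩
  · intro A F _ Z hZ
    exact maximal_part1 A F Z hZ
  · rintro X _ ⟨A, F, rfl⟩ Z hZ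
    obtain ⟨p, _, hZ'⟩ := maximal_part1 A (↑F) Z hZ
    classical
    exact ⟨A, insert p F, by rw [hZ', Finset.coe_insert]⟩
  · intro X hX
    exact maximal_part3 X hX
end
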